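/- arXiv:2106.11560 — 5 statements merged into one kernel-verified Lean document; each statement's English description precedes it below -/
import Mathlib

section
/- Let G be a semi-Markovian DAG satisfying Assumption 1. Let x_t ∈ X^(o) be a node with a directed edge x_t → t. Let G_e be the sub-sampled graph built from x_t and an arbitrary subset V_0 ⊆ {t}, and let Z ⊆ X^(o) \ {x_t}. If Z satisfies the back-door criterion relative to (t, y) in G, then e and y are d-separated by Z ∪ {t} in G_e. -/
namespace CausalDAG

variable {V : Type*}

/-- Adjacency: an edge between `u` and `v` in either direction. -/
def Adj (E : V → V → Prop) (u v : V) : Prop := E u v ∨ E v u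

/-- `d` is a descendant of `v`: there is a directed path from `v` to `d`. -/
def Descendant (E : V → V → Prop) (v d : V) : Prop := Relation.TransGen E v d

/-- The directed graph with edge relation `E` is acyclic. -/
def Acyclic (E : V → V → Prop) : Prop := ∀ v, ¬ Relation.TransGen E v v

/-- A path between `a` and `b` in the graph with edge relation `E`:
a sequence of at least two distinct nodes, starting at `a`, ending at `b`,
with consecutive nodes joined by an edge (in either direction). -/
structure GPath (E : V → V → Prop) (a b : V) where
  nodes : List V
  nodup : nodes.Nodup
  two_le : 2 ≤ nodes.length
  head_eq : nodes.head? = some a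
  last_eq : nodes.getLast? = some b
  chain : nodes.Chain' (Adj E)

namespace GPath

variable {E : V → V → Prop} {a b : V}

/-- `i` is an interior position of the path. -/
def Interior (p : GPath E a b) (i : ℕ) : Prop := 0 < i ∧ i + 1 < p.nodes.length

/-- The node at interior position `i` is a collider on the path: both adjacent
edges of the path point into it. -/
def ColliderAt (p : GPath E a b) (i : ℕ) : Prop :=
  ∃ x v z, p.nodes[i - 1]? = some x ∧ p.nodes[i]? = some v ∧
    p.nodes[i + 1]? = some z ∧ E x v ∧ E z v

/-- The path is blocked by the set `S`. -/
def BlockedBy (p : GPath E a b) (S : Set V) : Prop :=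
  ∃ i v, p.Interior i ∧ p.nodes[i]? = some v ∧
    ((¬ p.ColliderAt i ∧ v ∈ S) ∨
      (p.ColliderAt i ∧ v ∉ S ∧ ∀ d, Descendant E v d → d ∉ S))

/-- The path contains the directed edge `u → v` as one of its steps. -/
def UsesEdge (p : GPath E a b) (u v : V) : Prop :=
  E u v ∧ ∃ i, (p.nodes[i]? = some u ∧ p.nodes[i + 1]? = some v) ∨
    (p.nodes[i]? = some v ∧ p.nodes[i + 1]? = some u)

/-- The path contains an edge pointing into its first endpoint. -/
def IntoFirst (p : GPath E a b) : Prop :=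
  ∃ w, p.nodes[1]? = some w ∧ E w a

end GPath

/-- `a` and `b` are d-separated by `S`: every path between them is blocked by `S`. -/
def DSep (E : V → V → Prop) (a b : V) (S : Set V) : Prop :=
  ∀ p : GPath E a b, p.BlockedBy S

/-- `Z` satisfies the back-door criterion relative to `(t, y)`: no node of `Z` is a
descendant of `t`, and `Z` blocks every path between `t` and `y` containing an edge
pointing into `t`. -/
def BackDoor (E : V → V → Prop) (t y : V) (Z : Set V) : Prop :=
  (∀ z ∈ Z, ¬ Descendant E t z) ∧
  ∀ p : GPath E t y, p.IntoFirst → p.BlockedBy Z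

/-- A semi-Markovian DAG: observed features `Xo`, unobserved features `Xu`,
treatment `t`, outcome `y`; unobserved nodes have no parents and at most two
children. -/
structure SemiMarkov (V : Type*) where
  E : V → V → Prop
  Xo : Set V
  Xu : Set V
  t : V
  y : V
  acyclic : Acyclic E
  t_ne_y : t ≠ y
  t_notin : t ∉ Xo ∪ Xu
  y_notin : y ∉ Xo ∪ Xu
  disjoint : Disjoint Xo Xu
  cover : ∀ v, v ∈ Xo ∨ v ∈ Xu ∨ v = t ∨ v = y
  unobs_no_parents : ∀ u ∈ Xu, ∀ w, ¬ E w u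
  unobs_children : ∀ u ∈ Xu, ∃ a b, ∀ c, E u c → c = a ∨ c = b

/-- Assumption 1: `y` is the only child of `t`, and `y` has no children. -/
def Assumption1 (M : SemiMarkov V) : Prop :=
  M.E M.t M.y ∧ (∀ w, M.E M.t w → w = M.y) ∧ ∀ w, ¬ M.E M.y w

/-- Edge relation of the sub-sampled graph `G_e`: a new node `e` (represented by
`none`) is added, together with the edge `x_t → e` and an edge `v → e` for each
`v ∈ V0`. -/
def subEdge (E : V → V → Prop) (xt : V) (V0 : Set V) :
    Option V → Option V → Prop
  | some u, some v => E u v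
  | some u, none => u = xt ∨ u ∈ V0
  | none, _ => False

end CausalDAG

@[simp]
def List.get? {α : Type*} (l : List α) (n : ℕ) : Option α := l[n]?

theorem List.get?_eq_getElem? {α : Type*} (l : List α) (n : ℕ) : l.get? n = l[n]? := rfl

theorem List.get?_eq_get {α : Type*} {l : List α} {n : ℕ} (h : n < l.length) :
    l.get? n = some (l[n]'h) := by
  simp [List.get?, h]

namespace CausalDAGAux

open List

lemma get?_lt {α : Type*} {l : List α} {n : ℕ} {a : α} (h : l.get? n = some a) :
    n < l.length := by
  rw [List.get?_eq_getElem?] at h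
  exact (List.getElem?_eq_some_iff.1 h).1

lemma get?_mem {α : Type*} {l : List α} {n : ℕ} {a : α} (h : l.get? n = some a) :
    a ∈ l := by
  rw [List.get?_eq_getElem?] at h
  exact List.mem_of_getElem? h

lemma chain'_rel_get? {α : Type*} {R : α → α → Prop} {l : List α} (h : l.Chain' R)
    {i : ℕ} {a b : α} (ha : l.get? i = some a) (hb : l.get? (i+1) = some b) : R a b := by
  rw [List.Chain', List.isChain_iff_getElem] at h
  have hib : i + 1 < l.length := get?_lt hb
  have h2 := h i (by omega)
  rw [List.get?_eq_get (by omega : i < l.length)] at ha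
  rw [List.get?_eq_get hib] at hb
  rw [Option.some_inj] at ha hb
  rwa [ha, hb] at h2

lemma chain'_transGen_of_mem_tail {α : Type*} {E : α → α → Prop} :
    ∀ {l : List α} {a b : α}, List.Chain' E (a :: l) → b ∈ l → Relation.TransGen E a b
  | [], _, _, _, h => absurd h (List.not_mem_nil)
  | c :: l, a, b, hch, hb => by
    rw [List.Chain', List.isChain_cons_cons] at hch
    rcases List.mem_cons.1 hb with rfl | hb
    · exact Relation.TransGen.single hch.1
    · exact Relation.TransGen.head hch.1 (chain'_transGen_of_mem_tail hch.2 hb)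

lemma nodup_of_chain' {α : Type*} {E : α → α → Prop} (hac : ∀ v, ¬ Relation.TransGen E v v) :
    ∀ {l : List α}, List.Chain' E l → l.Nodup
  | [], _ => List.nodup_nil
  | a :: l, h => List.nodup_cons.2
      ⟨fun hmem => hac a (chain'_transGen_of_mem_tail h hmem),
        nodup_of_chain' hac h.tail⟩

lemma transGen_flip {α : Type*} {E : α → α → Prop} {a b : α}
    (h : Relation.TransGen (flip E) a b) : Relation.TransGen E b a := by
  induction h with
  | single e => exact Relation.TransGen.single e
  | tail _ e ih => exact Relation.TransGen.head e ih

lemma chain'_transGen_to_last {α : Type*} {E : α → α → Prop} {l : List α} {b x : α}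
    (hch : List.Chain' E l) (hlast : l.getLast? = some b) (hx : x ∈ l) :
    x = b ∨ Relation.TransGen E x b := by
  have h1 : List.Chain' (flip E) l.reverse := by
    rw [List.Chain', List.isChain_reverse]; exact hch
  have h2 : l.reverse.head? = some b := by rwa [List.head?_reverse]
  cases hrev : l.reverse with
  | nil => rw [hrev] at h2; simp at h2
  | cons c rest =>
    rw [hrev] at h1 h2
    simp only [List.head?_cons, Option.some_inj] at h2
    subst h2
    have hx' : x ∈ c :: rest := by
      rw [← hrev]; exact List.mem_reverse.2 hx
    rcases List.mem_cons.1 hx' with rfl | hx'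
    · exact Or.inl rfl
    · exact Or.inr (transGen_flip (chain'_transGen_of_mem_tail h1 hx'))

lemma transGen_chain {α : Type*} {E : α → α → Prop} {a b : α}
    (h : Relation.TransGen E a b) :
    ∃ l : List α, List.Chain' E (a :: l) ∧ (a :: l).getLast? = some b := by
  induction h with
  | single e => exact ⟨[_], by simp [List.Chain', List.isChain_cons_cons, e], rfl⟩
  | @tail b c _ e ih =>
    obtain ⟨l, hch, hl⟩ := ih
    refine ⟨l ++ [c], ?_, ?_⟩
    · rw [← List.cons_append]
      refine List.IsChain.append hch (List.isChain_singleton _) ?_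
      intro x hx z hz
      rw [hl, Option.mem_def, Option.some_inj] at hx
      simp only [List.head?_cons, Option.mem_def, Option.some_inj] at hz
      subst hx; subst hz; exact e
    · rw [← List.cons_append, List.getLast?_append_of_ne_nil]
      · rfl
      · simp

lemma all_some {α : Type*} {l : List (Option α)} (h : ∀ o ∈ l, o ≠ none) :
    ∃ us : List α, l = us.map some := by
  induction l with
  | nil => exact ⟨[], rfl⟩
  | cons a l ih =>
    obtain ⟨us, rfl⟩ := ih (fun o ho => h o (List.mem_cons_of_mem _ ho))
    cases a with
    | none => exact absurd rfl (h none (List.mem_cons_self))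
    | some x => exact ⟨x :: us, rfl⟩

end CausalDAGAux

namespace CausalDAG
variable {V : Type*}

lemma transGen_subEdge_some {E : V → V → Prop} {xt : V} {V0 : Set V} {v : V} {b : Option V}
    (h : Relation.TransGen (subEdge E xt V0) (some v) b) :
    b = none ∨ ∃ d, b = some d ∧ Relation.TransGen E v d := by
  induction h with
  | @single b e =>
    cases b with
    | none => exact Or.inl rfl
    | some d => exact Or.inr ⟨d, rfl, Relation.TransGen.single e⟩
  | @tail b c _ e ih =>
    rcases ih with rfl | ⟨d, rfl, hd⟩
    · exact absurd e (by simp [subEdge])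
    · cases c with
      | none => exact Or.inl rfl
      | some d' => exact Or.inr ⟨d', rfl, hd.tail e⟩

lemma desc_t_eq_y (M : SemiMarkov V) (hA1 : Assumption1 M) {d : V}
    (h : Relation.TransGen M.E M.t d) : d = M.y := by
  induction h with
  | single e => exact hA1.2.1 _ e
  | tail _ e ih => subst ih; exact absurd e (hA1.2.2 _)

lemma not_transGen_y (M : SemiMarkov V) (hA1 : Assumption1 M) {d : V}
    (h : Relation.TransGen M.E M.y d) : False := by
  induction h with
  | single e => exact hA1.2.2 _ e
  | tail _ e ih => exact ih

end CausalDAG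
open CausalDAG in
/-- necessity, Theorem 2: if `Z` satisfies the back-door criterion,
then `e` and `y` are d-separated by `Z ∪ {t}` in the sub-sampled graph. -/
theorem stmt1 {V : Type*} [Finite V] (M : SemiMarkov V)
    (hA1 : Assumption1 M)
    (xt : V) (hxt : xt ∈ M.Xo) (hedge : M.E xt M.t)
    (V0 : Set V) (hV0 : V0 ⊆ ({M.t} : Set V))
    (Z : Set V) (hZ : Z ⊆ M.Xo \ {xt})
    (hbd : BackDoor M.E M.t M.y Z) :
    DSep (subEdge M.E xt V0) (none : Option V) (some M.y)
      (some '' (Z ∪ {M.t})) := by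
  classical
  intro p
  set S : Set (Option V) := some '' (Z ∪ {M.t}) with hS
  -- basic non-membership facts
  have htXo : M.t ∉ M.Xo := fun h => M.t_notin (Set.mem_union_left _ h)
  have hyXo : M.y ∉ M.Xo := fun h => M.y_notin (Set.mem_union_left _ h)
  have htZ : M.t ∉ Z := fun h => htXo (hZ h).1
  have hyZ : M.y ∉ Z := fun h => hyXo (hZ h).1
  have hxtZ : xt ∉ Z := fun h => (hZ h).2 rfl
  have hxtt : xt ≠ M.t := fun h => htXo (h ▸ hxt)
  have hxty : xt ≠ M.y := fun h => hyXo (h ▸ hxt)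
  have hmemS : ∀ x : V, (some x ∈ S) ↔ (x ∈ Z ∨ x = M.t) := by
    intro x
    constructor
    · rintro ⟨w, hw, hww⟩
      cases hww
      rcases hw with hw | hw
      · exact Or.inl hw
      · exact Or.inr hw
    · rintro (hx | hx)
      · exact ⟨x, Or.inl hx, rfl⟩
      · exact ⟨x, Or.inr hx, rfl⟩
  have hnoneS : (none : Option V) ∉ S := by rintro ⟨w, _, hw⟩; cases hw
  -- decompose p.nodes
  obtain ⟨rest0, hns0⟩ : ∃ rest, p.nodes = none :: rest := by
    cases hh : p.nodes with
    | nil => have := p.head_eq; rw [hh] at this; cases this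
    | cons a r =>
      have := p.head_eq; rw [hh] at this
      simp only [List.head?_cons, Option.some_inj] at this
      exact ⟨r, by rw [this]⟩
  obtain ⟨us, hrest⟩ : ∃ us : List V, rest0 = us.map some := by
    apply CausalDAGAux.all_some
    intro o ho hnone
    subst hnone
    have := p.nodup
    rw [hns0, List.nodup_cons] at this
    exact this.1 ho
  have hns : p.nodes = none :: us.map some := by rw [hns0, hrest]
  have hplen : p.nodes.length = us.length + 1 := by simp [hns]
  have hgetp : ∀ i, p.nodes.get? (i+1) = (us.get? i).map some := by
    intro i
    simp [hns, List.get?_eq_getElem?]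
  have hget0 : p.nodes.get? 0 = some none := by simp [hns]
  have husne : us ≠ [] := by
    intro h
    have := p.two_le
    rw [hplen, h] at this
    simp at this
  have hlastus : us.getLast? = some M.y := by
    have := p.last_eq
    rw [hns, List.getLast?_cons, List.getLast?_map] at this
    · cases hul : us.getLast? with
      | none => rw [List.getLast?_eq_none_iff] at hul; exact absurd hul husne
      | some a =>
        rw [hul] at this
        simp only [Option.map_some, Option.getD_some, Option.some_inj] at this
        cases this; rfl
  have hndus : us.Nodup := by
    have := p.nodup
    rw [hns, List.nodup_cons] at this
    exact (List.nodup_map_iff (Option.some_injective V)).1 this.2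
  have hchus : us.Chain' (Adj M.E) := by
    have := p.chain
    rw [hns] at this
    have h2 := this.tail
    simp only [List.tail_cons] at h2
    have h3 := (List.isChain_map some).1 h2
    refine h3.imp ?_
    intro a b hab
    rcases hab with h | h
    · exact Or.inl h
    · exact Or.inr h
  -- a general helper : adjacency along us
  have hadjus : ∀ k a b, us.get? k = some a → us.get? (k+1) = some b → Adj M.E a b :=
    fun k a b ha hb => CausalDAGAux.chain'_rel_get? hchus ha hb
  have husy : us.get? (us.length - 1) = some M.y := by
    rw [List.get?_eq_getElem?, ← List.getLast?_eq_getElem?]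
    exact hlastus
  -- the first node of us
  obtain ⟨x₁, hx₁, hx₁e⟩ : ∃ x₁, us.get? 0 = some x₁ ∧ (x₁ = xt ∨ x₁ = M.t) := by
    cases hus : us with
    | nil => exact absurd hus husne
    | cons a r =>
      refine ⟨a, by simp, ?_⟩
      have := p.chain
      rw [hns, hus] at this
      simp only [List.map_cons, List.Chain', List.isChain_cons_cons] at this
      rcases this.1 with h | h
      · exact absurd h (by simp [subEdge] at h ⊢)
      · rcases h with h | h
        · exact Or.inl h
        · exact Or.inr (hV0 h)
  have huslen1 : 1 ≤ us.length := by
    cases us with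
    | nil => exact absurd rfl husne
    | cons a r => simp
  rcases hx₁e with rfl | rfl
  · -- main case : first node is xt
    have huslen2 : 2 ≤ us.length := by
      rcases Nat.lt_or_ge us.length 2 with h | h
      · have hu : us.length = 1 := by omega
        exfalso
        have : us.get? 0 = some M.y := by
          have := husy; rwa [hu] at this
        rw [hx₁] at this
        exact hxty (Option.some_inj.1 this)
      · exact h
    by_contra hcon
    have hub : ∀ i v, p.Interior i → p.nodes.get? i = some v →
        ¬ ((¬ p.ColliderAt i ∧ v ∈ S) ∨
          (p.ColliderAt i ∧ v ∉ S ∧ ∀ d, Descendant (subEdge M.E x₁ V0) v d → d ∉ S)) :=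
      fun i v h1 h2 h3 => hcon ⟨i, v, h1, h2, h3⟩
    -- collider predicate in V-land
    set VCol : ℕ → Prop := fun k => ∃ a x c, us.get? (k-1) = some a ∧ us.get? k = some x ∧
      us.get? (k+1) = some c ∧ M.E a x ∧ M.E c x with hVCol
    have hcolT : ∀ k, 1 ≤ k → (p.ColliderAt (k+1) ↔ VCol k) := by
      intro k hk
      obtain ⟨k', rfl⟩ : ∃ k', k = k' + 1 := ⟨k - 1, by omega⟩
      have e1 : k' + 1 + 1 - 1 = k' + 1 := by omega
      have e2 : k' + 1 - 1 = k' := by omega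
      constructor
      · rintro ⟨a, x, c, ha, hx, hc, hax, hcx⟩
        rw [e1, ← List.get?_eq_getElem?, hgetp] at ha
        rw [show (k' + 1 + 1 : ℕ) = (k' + 1) + 1 by rfl, ← List.get?_eq_getElem?, hgetp] at hc
        rw [← List.get?_eq_getElem?, hgetp] at hx
        cases ha' : us.get? k' with
        | none => rw [ha', Option.map_none] at ha; cases ha
        | some a' =>
        cases hx' : us.get? (k'+1) with
        | none => rw [hx', Option.map_none] at hx; cases hx
        | some x' =>
        cases hc' : us.get? (k'+1+1) with
        | none => rw [hc', Option.map_none] at hc; cases hc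
        | some c' =>
        rw [ha'] at ha; rw [hx'] at hx; rw [hc'] at hc
        simp only [Option.map_some, Option.some_inj] at ha hx hc
        subst ha; subst hx; subst hc
        exact ⟨a', x', c', by rw [e2]; exact ha', hx', hc', hax, hcx⟩
      · rintro ⟨a, x, c, ha, hx, hc, hax, hcx⟩
        rw [e2] at ha
        refine ⟨some a, some x, some c, ?_, ?_, ?_, hax, hcx⟩
        · rw [e1, ← List.get?_eq_getElem?, hgetp, ha]; rfl
        · rw [← List.get?_eq_getElem?, hgetp, hx]; rfl
        · rw [show (k' + 1 + 1 : ℕ) = (k' + 1) + 1 by rfl, ← List.get?_eq_getElem?, hgetp, hc]; rfl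
    -- the unblockedness transferred to V-land
    have hubV : ∀ k x, 1 ≤ k → k + 1 < us.length → us.get? k = some x →
        (¬ VCol k → x ∉ Z ∧ x ≠ M.t) ∧
        (VCol k → x ∈ Z ∨ x = M.t ∨
          ∃ d, Relation.TransGen M.E x d ∧ (d ∈ Z ∨ d = M.t)) := by
      intro k x hk hklen hx
      have hint : p.Interior (k+1) := ⟨Nat.succ_pos _, by omega⟩
      have hgp : p.nodes.get? (k+1) = some (some x) := by rw [hgetp, hx]; rfl
      have h := hub (k+1) (some x) hint hgp
      constructor
      · intro hnc
        have hxS : some x ∉ S :=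
          fun hs => h (Or.inl ⟨fun hc => hnc ((hcolT k hk).1 hc), hs⟩)
        rw [hmemS] at hxS
        push_neg at hxS
        exact hxS
      · intro hc
        by_cases hxS : some x ∈ S
        · rcases (hmemS x).1 hxS with h' | h'
          · exact Or.inl h'
          · exact Or.inr (Or.inl h')
        · have hnall : ¬ ∀ d, Descendant (subEdge M.E x₁ V0) (some x) d → d ∉ S :=
            fun hall => h (Or.inr ⟨(hcolT k hk).2 hc, hxS, hall⟩)
          push_neg at hnall
          obtain ⟨d, hd, hdS⟩ := hnall
          rcases transGen_subEdge_some hd with rfl | ⟨d', rfl, hd'⟩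
          · exact absurd hdS hnoneS
          · exact Or.inr (Or.inr ⟨d', hd', (hmemS d').1 hdS⟩)
    -- the predicate used for choosing the splice point
    set P : ℕ → Prop := fun k => k + 1 < us.length ∧ ∃ x, us.get? k = some x ∧
      (x = M.t ∨ Relation.TransGen M.E x M.t) ∧
      (k = 0 ∨ (VCol k ∧ x ∉ Z ∧ ∀ d, Relation.TransGen M.E x d → d ∉ Z)) with hP
    have hP0 : P 0 := ⟨by omega, x₁, hx₁, Or.inr (Relation.TransGen.single hedge), Or.inl rfl⟩
    set i0 : ℕ := Nat.findGreatest P us.length with hi0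
    have hPi : P i0 := Nat.findGreatest_spec (Nat.zero_le _) hP0
    have hmax : ∀ k, P k → k ≤ i0 := by
      intro k hk
      by_contra hlt
      exact Nat.findGreatest_is_greatest (n := us.length) (P := P) (by omega) (by omega) hk
    have htP : ∀ k, 1 ≤ k → k + 1 < us.length → us.get? k = some M.t → P k := by
      intro k hk hk1 hkt
      by_cases hc : VCol k
      · refine ⟨hk1, M.t, hkt, Or.inl rfl, Or.inr ⟨hc, htZ, fun d hd => ?_⟩⟩
        rw [desc_t_eq_y M hA1 hd]; exact hyZ
      · exact absurd rfl ((hubV k M.t hk hk1 hkt).1 hc).2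
    obtain ⟨hi1, v, hvget, hvanc, hvrest⟩ := hPi
    -- construct the initial segment ws : a directed Z-avoiding path from v to t
    obtain ⟨ws, hwsh, hwsl, hwsch, hwsnd, hwsZ⟩ :
        ∃ ws : List V, ws.head? = some v ∧ ws.getLast? = some M.t ∧
          ws.Chain' M.E ∧ ws.Nodup ∧ (∀ w ∈ ws, w ∉ Z) := by
      rcases hvrest with h0 | ⟨hvcol, hvZ, hvdZ⟩
      · -- i0 = 0 : v = x₁, take the edge x₁ → t
        have hv : v = x₁ := by
          rw [h0] at hvget
          rw [hvget] at hx₁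
          exact Option.some_inj.1 hx₁
        subst hv
        refine ⟨[v, M.t], rfl, rfl, ?_, ?_, ?_⟩
        · simp [List.Chain', List.isChain_cons_cons, hedge]
        · simp [hxtt]
        · intro w hw
          rcases List.mem_cons.1 hw with rfl | hw
          · exact hxtZ
          · rcases List.mem_cons.1 hw with rfl | hw
            · exact htZ
            · exact absurd hw (List.not_mem_nil)
      · rcases hvanc with rfl | hvt
        · exact ⟨[M.t], rfl, rfl, List.isChain_singleton _, List.nodup_singleton _,
            fun w hw => by rcases List.mem_cons.1 hw with rfl | hw
                           · exact htZ
                           · exact absurd hw (List.not_mem_nil)⟩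
        · obtain ⟨l, hch, hlast⟩ := CausalDAGAux.transGen_chain hvt
          refine ⟨v :: l, rfl, hlast, hch, CausalDAGAux.nodup_of_chain' M.acyclic hch, ?_⟩
          intro w hw
          rcases List.mem_cons.1 hw with rfl | hw
          · exact hvZ
          · exact hvdZ w (CausalDAGAux.chain'_transGen_of_mem_tail hch hw)
    have hwsne : ws ≠ [] := by
      intro h; rw [h] at hwsh; cases hwsh
    have hwsny : ∀ w ∈ ws, w ≠ M.y := by
      intro w hw
      rcases CausalDAGAux.chain'_transGen_to_last hwsch hwsl hw with rfl | htr
      · exact M.t_ne_y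
      · rintro rfl
        exact not_transGen_y M hA1 htr
    -- the reversed ws and the suffix ss
    set rws : List V := ws.reverse with hrws
    have hrwsh : rws.get? 0 = some M.t := by
      rw [List.get?_eq_getElem?, ← List.head?_eq_getElem?, hrws, List.head?_reverse]
      exact hwsl
    have hrwsl : rws.get? (rws.length - 1) = some v := by
      rw [List.get?_eq_getElem?, ← List.getLast?_eq_getElem?, hrws, List.getLast?_reverse]
      exact hwsh
    have hrwsch : rws.Chain' (flip M.E) := by
      rw [hrws, List.Chain', List.isChain_reverse]; exact hwsch
    have hrwsnd : rws.Nodup := by rw [hrws, List.nodup_reverse]; exact hwsnd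
    have hrwsmem : ∀ w ∈ rws, w ∈ ws := fun w hw => List.mem_reverse.1 hw
    have hrwsne : rws ≠ [] := by
      intro h; rw [h] at hrwsh; cases hrwsh
    set ss : List V := us.drop i0 with hss
    have hssget : ∀ j, ss.get? j = us.get? (i0 + j) := by
      intro j
      rw [hss]
      simp [List.get?_eq_getElem?, List.getElem?_drop]
    have hsslen : ss.length = us.length - i0 := by rw [hss]; simp
    have hss0 : ss.get? 0 = some v := by rw [hssget]; simpa using hvget
    have hsslast : ss.get? (ss.length - 1) = some M.y := by
      rw [hssget, hsslen]
      rw [show i0 + (us.length - i0 - 1) = us.length - 1 by omega]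
      exact husy
    have hssnd : ss.Nodup := List.Nodup.sublist (List.drop_sublist _ _) hndus
    -- t can only occur in ss at position 0
    have htss : ∀ j, 1 ≤ j → ss.get? j = some M.t → False := by
      intro j hj hjt
      rw [hssget] at hjt
      have hjlt : i0 + j < us.length := CausalDAGAux.get?_lt hjt
      by_cases hlast : i0 + j = us.length - 1
      · rw [hlast, husy] at hjt
        exact M.t_ne_y (Option.some_inj.1 hjt).symm
      · have := hmax (i0 + j) (htP (i0 + j) (by omega) (by omega) hjt)
        omega
    -- splice point : first element of rws lying on ss
    have hQex : ∃ j, ∃ w, rws.get? j = some w ∧ w ∈ ss :=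
      ⟨rws.length - 1, v, hrwsl, CausalDAGAux.get?_mem hss0⟩
    set idx : ℕ := Nat.find hQex with hidx
    obtain ⟨wJ, hwJget, hwJss⟩ : ∃ w, rws.get? idx = some w ∧ w ∈ ss := Nat.find_spec hQex
    have hQmin : ∀ j, j < idx → ∀ w, rws.get? j = some w → w ∉ ss := by
      intro j hj w hw hwss
      exact Nat.find_min hQex hj ⟨w, hw, hwss⟩
    have hidxlt : idx < rws.length := CausalDAGAux.get?_lt hwJget
    have hwJws : wJ ∈ ws := hrwsmem _ (CausalDAGAux.get?_mem hwJget)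
    have hwJZ : wJ ∉ Z := hwsZ _ hwJws
    have hwJy : wJ ≠ M.y := hwsny _ hwJws
    -- position of wJ inside ss
    have hRex : ∃ j, ss.get? j = some wJ := by
      obtain ⟨n, hn, hn2⟩ := List.mem_iff_getElem.1 hwJss
      exact ⟨n, by rw [List.get?_eq_getElem?]; rw [List.getElem?_eq_getElem hn, hn2]⟩
    set pos : ℕ := Nat.find hRex with hpos
    have hposget : ss.get? pos = some wJ := Nat.find_spec hRex
    have hposlt : pos < ss.length := CausalDAGAux.get?_lt hposget
    have hposlt1 : pos + 1 < ss.length := by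
      rcases Nat.lt_or_ge (pos+1) ss.length with h | h
      · exact h
      · exfalso
        have : pos = ss.length - 1 := by omega
        rw [this, hsslast] at hposget
        exact hwJy (Option.some_inj.1 hposget).symm
    have hwJus : us.get? (i0 + pos) = some wJ := by rw [← hssget]; exact hposget
    -- the two halves of the new path
    set A : List V := rws.take (idx + 1) with hA
    set B : List V := ss.drop (pos + 1) with hB
    have hAlen : A.length = idx + 1 := by
      rw [hA, List.length_take]; omega
    have hAget : ∀ j, j ≤ idx → A.get? j = rws.get? j := by
      intro j hj
      rw [hA, List.get?_eq_getElem?, List.get?_eq_getElem?, List.getElem?_take_of_lt (by omega)]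
    have hBlen : B.length = ss.length - (pos + 1) := by rw [hB]; simp
    have hBget : ∀ j, B.get? j = us.get? (i0 + pos + 1 + j) := by
      intro j
      rw [hB, List.get?_eq_getElem?, List.getElem?_drop, ← List.get?_eq_getElem?, hssget,
        show i0 + (pos + 1 + j) = i0 + pos + 1 + j by omega]
    set qn : List V := A ++ B with hqn
    have hqlen : qn.length = idx + 1 + B.length := by rw [hqn, List.length_append, hAlen]
    have hqlo : ∀ j, j ≤ idx → qn.get? j = rws.get? j := by
      intro j hj
      rw [hqn, List.get?_eq_getElem?, List.getElem?_append_left (by omega),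
        ← List.get?_eq_getElem?, hAget j hj]
    have hqhi : ∀ j, qn.get? (idx + 1 + j) = us.get? (i0 + pos + 1 + j) := by
      intro j
      rw [hqn, List.get?_eq_getElem?, List.getElem?_append_right (by omega)]
      rw [hAlen, show idx + 1 + j - (idx + 1) = j by omega, ← List.get?_eq_getElem?, hBget]
    have hqidx : qn.get? idx = some wJ := by rw [hqlo idx le_rfl, hwJget]
    have hqhi' : ∀ j, qn.get? (idx + j) = us.get? (i0 + pos + j) := by
      intro j
      cases j with
      | zero => simpa using hqidx.trans (by rw [← hwJus]; simp)
      | succ j' =>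
        rw [show idx + (j' + 1) = idx + 1 + j' by omega, hqhi,
          show i0 + pos + (j' + 1) = i0 + pos + 1 + j' by omega]
    have hBne : B ≠ [] := by
      intro h
      have : B.length = 0 := by rw [h]; rfl
      omega
    have hq_two : 2 ≤ qn.length := by
      have : 1 ≤ B.length := by
        rcases Nat.eq_zero_or_pos B.length with h | h
        · exact absurd (List.length_eq_zero_iff.1 h) hBne
        · exact h
      omega
    have hq_head : qn.head? = some M.t := by
      rw [List.head?_eq_getElem?, ← List.get?_eq_getElem?, hqlo 0 (Nat.zero_le _), hrwsh]
    have hq_last : qn.getLast? = some M.y := by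
      rw [List.getLast?_eq_getElem?, ← List.get?_eq_getElem?, hqlen]
      rw [show idx + 1 + B.length - 1 = idx + 1 + (B.length - 1) by omega, hqhi, hBlen, hsslen]
      rw [show i0 + pos + 1 + (us.length - i0 - (pos + 1) - 1) = us.length - 1 by omega]
      exact husy
    have hq_nodup : qn.Nodup := by
      rw [hqn]
      refine List.Nodup.append ?_ ?_ ?_
      · exact List.Nodup.sublist (List.take_sublist _ _) hrwsnd
      · exact List.Nodup.sublist (List.drop_sublist _ _) hssnd
      · intro a haA haB
        have hass : a ∈ ss := (List.drop_sublist _ _).subset haB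
        obtain ⟨n, hn, hn2⟩ := List.mem_iff_getElem.1 haA
        have hna : A.get? n = some a := by
          rw [List.get?_eq_getElem?, List.getElem?_eq_getElem hn, hn2]
        rw [hAlen] at hn
        rw [hAget n (by omega)] at hna
        rcases Nat.lt_or_ge n idx with hlt | hge
        · exact hQmin n hlt a hna hass
        · have : n = idx := by omega
          subst this
          rw [hwJget] at hna
          cases Option.some_inj.1 hna
          obtain ⟨m, hm, hm2⟩ := List.mem_iff_getElem.1 haB
          have hmb : B.get? m = some wJ := by
            rw [List.get?_eq_getElem?, List.getElem?_eq_getElem hm, hm2]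
          rw [hBget, show i0 + pos + 1 + m = i0 + (pos + 1 + m) by omega, ← hssget] at hmb
          have := (List.getElem?_inj (l := ss) (i := pos) (j := pos + 1 + m) (by omega) hssnd).1 ?_
          · omega
          · rw [← List.get?_eq_getElem?, ← List.get?_eq_getElem?, hposget, hmb]
    have hq_chain : qn.Chain' (Adj M.E) := by
      rw [hqn]
      refine List.IsChain.append ?_ ?_ ?_
      · refine List.IsChain.imp ?_ (List.IsChain.take hrwsch _)
        intro a b h
        exact Or.inr h
      · rw [hB, hss]
        exact List.IsChain.drop (List.IsChain.drop hchus _) _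
      · intro a ha z hz
        have hA_last : A.getLast? = some wJ := by
          rw [List.getLast?_eq_getElem?, hAlen, show idx + 1 - 1 = idx by omega,
            ← List.get?_eq_getElem?, hAget idx le_rfl, hwJget]
        rw [Option.mem_def, hA_last, Option.some_inj] at ha
        rw [Option.mem_def] at hz
        have hz' : us.get? (i0 + pos + 1) = some z := by
          have h0 := hBget 0
          rw [List.get?_eq_getElem?, ← List.head?_eq_getElem?, hz] at h0
          simpa using h0.symm
        cases ha
        exact hadjus (i0 + pos) wJ z hwJus hz'
    -- the new path violates the back-door criterion
    have hqInto : ∃ w, qn.get? 1 = some w ∧ M.E w M.t := by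
      rcases Nat.eq_zero_or_pos idx with hidx0 | hidxpos
      · -- idx = 0 : wJ = t, pos = 0, v = t, and i0 is a collider position
        have hwJt : wJ = M.t := by
          rw [hidx0, hrwsh] at hwJget
          exact (Option.some_inj.1 hwJget).symm
        have hpos0 : pos = 0 := by
          by_contra hne
          exact htss pos (by omega) (by rw [hposget, hwJt])
        have hvt : v = M.t := by
          rw [hpos0] at hposget
          rw [hss0] at hposget
          rw [← hwJt]
          exact Option.some_inj.1 hposget
        have hi0ne : i0 ≠ 0 := by
          intro h
          rw [h] at hvget
          rw [hvget] at hx₁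
          exact hxtt (hvt ▸ (Option.some_inj.1 hx₁).symm)
        rcases hvrest with h0 | ⟨hvcol, _, _⟩
        · exact absurd h0 hi0ne
        · obtain ⟨a, x, c, ha, hxv, hc, hax, hcx⟩ := hvcol
          rw [hvget] at hxv
          cases Option.some_inj.1 hxv
          refine ⟨c, ?_, ?_⟩
          · have := hqhi 0
            rw [hidx0, hpos0] at this
            simpa using this.trans (by simpa using hc)
          · rw [← hvt]; exact hcx
      · -- idx ≥ 1 : the second node of rws is a parent of t
        have h1lt : 1 < rws.length := by omega
        have hw1 : rws.get? 1 = some (rws.get ⟨1, h1lt⟩) := List.get?_eq_get h1lt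
        refine ⟨rws.get ⟨1, h1lt⟩, ?_, ?_⟩
        · rw [← hw1, ← hqlo 1 (by omega)]
        · have := CausalDAGAux.chain'_rel_get? hrwsch hrwsh hw1
          exact this
    obtain ⟨w1, hw1get, hw1e⟩ := hqInto
    have hqb : GPath.BlockedBy ⟨qn, hq_nodup, hq_two, hq_head, hq_last, hq_chain⟩ Z :=
      hbd.2 ⟨qn, hq_nodup, hq_two, hq_head, hq_last, hq_chain⟩ ⟨w1, hw1get, hw1e⟩
    obtain ⟨h, x, ⟨hh0, hhlen⟩, hxget, hcl⟩ := hqb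
    simp only [GPath.ColliderAt] at hcl
    -- hxget : qn.get? h = some x (definitionally)
    have hxget' : qn.get? h = some x := hxget
    have hhlen' : h + 1 < qn.length := hhlen
    rcases Nat.lt_or_ge h (idx + 1) with hlo | hhi
    · -- position inside the directed part : never blocked
      have hxrws : rws.get? h = some x := by rw [← hqlo h (by omega)]; exact hxget'
      have hxZ : x ∉ Z := hwsZ _ (hrwsmem _ (CausalDAGAux.get?_mem hxrws))
      have hnc : ¬ (∃ a b c, qn.get? (h-1) = some a ∧ qn.get? h = some b ∧
          qn.get? (h+1) = some c ∧ M.E a b ∧ M.E c b) := by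
        rintro ⟨a, b, c, ha, hb, hc, hab, hcb⟩
        have ha' : rws.get? (h-1) = some a := by rw [← hqlo _ (by omega)]; exact ha
        have hb' : rws.get? h = some b := by rw [← hqlo _ (by omega)]; exact hb
        have hba : M.E b a := by
          have := CausalDAGAux.chain'_rel_get? hrwsch ha'
            (by rw [show h - 1 + 1 = h by omega]; exact hb')
          exact this
        exact M.acyclic a ((Relation.TransGen.single hab).tail hba)
      rcases hcl with ⟨_, hxZ'⟩ | ⟨hcol, _, _⟩
      · exact hxZ hxZ'
      · exact hnc hcol
    · -- position inside the suffix
      obtain ⟨g, rfl⟩ : ∃ g, h = idx + 1 + g := ⟨h - idx - 1, by omega⟩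
      set K : ℕ := i0 + pos + 1 + g with hK
      have hxK : us.get? K = some x := by rw [hK, ← hqhi g]; exact hxget'
      have hKlen : K + 1 < us.length := by
        rw [hqlen, hBlen, hsslen] at hhlen'
        omega
      have hK1 : 1 ≤ K := by omega
      have hcolK : (∃ a b c, qn.get? (idx+1+g-1) = some a ∧ qn.get? (idx+1+g) = some b ∧
          qn.get? (idx+1+g+1) = some c ∧ M.E a b ∧ M.E c b) ↔ VCol K := by
        have eL : qn.get? (idx+1+g-1) = us.get? (K-1) := by
          rw [show idx + 1 + g - 1 = idx + g by omega, hqhi' g,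
            show K - 1 = i0 + pos + g by omega]
        have eM : qn.get? (idx+1+g) = us.get? K := by rw [hqhi g, hK]
        have eR : qn.get? (idx+1+g+1) = us.get? (K+1) := by
          rw [show idx + 1 + g + 1 = idx + 1 + (g+1) by omega, hqhi (g+1),
            show K + 1 = i0 + pos + 1 + (g+1) by omega]
        constructor
        · rintro ⟨a, b, c, ha, hb, hc, hab, hcb⟩
          exact ⟨a, b, c, by rw [← eL]; exact ha, by rw [← eM]; exact hb,
            by rw [← eR]; exact hc, hab, hcb⟩
        · rintro ⟨a, b, c, ha, hb, hc, hab, hcb⟩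
          exact ⟨a, b, c, by rw [eL]; exact ha, by rw [eM]; exact hb,
            by rw [eR]; exact hc, hab, hcb⟩
      have hKgt : i0 < K := by omega
      rcases hcl with ⟨hnc, hxZ'⟩ | ⟨hcol, hxZ, hxd⟩
      · -- non-collider in Z : impossible since p is unblocked there
        have hncK : ¬ VCol K := fun hc => hnc (hcolK.2 hc)
        exact ((hubV K x hK1 hKlen hxK).1 hncK).1 hxZ'
      · -- collider : impossible by maximality of i0
        have hcK : VCol K := hcolK.1 hcol
        rcases (hubV K x hK1 hKlen hxK).2 hcK with hxZ2 | hxt2 | ⟨d, hd, hdZ⟩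
        · exact hxZ hxZ2
        · subst hxt2
          exact absurd (hmax K (htP K hK1 hKlen hxK)) (by omega)
        · rcases hdZ with hdZ | rfl
          · exact hxd d hd hdZ
          · have hPK : P K := ⟨hKlen, x, hxK, Or.inr hd, Or.inr ⟨hcK, hxZ, hxd⟩⟩
            exact absurd (hmax K hPK) (by omega)
  · -- easy case : first node is t; the path is blocked at position 1
    have huslen2 : 2 ≤ us.length := by
      rcases Nat.lt_or_ge us.length 2 with h | h
      · have hu : us.length = 1 := by omega
        exfalso
        have : us.get? 0 = some M.y := by
          have := husy; rwa [hu] at this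
        rw [hx₁] at this
        exact M.t_ne_y (Option.some_inj.1 this)
      · exact h
    refine ⟨1, some M.t, ⟨Nat.one_pos, by omega⟩, ?_, Or.inl ⟨?_, ?_⟩⟩
    · rw [← List.get?_eq_getElem?, hgetp 0, hx₁]; rfl
    · rintro ⟨a, b, c, ha, hb, hc, hab, hcb⟩
      rw [← List.get?_eq_getElem?, hget0] at ha
      cases Option.some_inj.1 ha
      exact hab
    · exact (hmemS M.t).2 (Or.inr rfl)
end

section
/- Let G be a semi-Markovian DAG satisfying Assumption 1. Let x_t ∈ X^(o) be a node with a directed edge x_t → t, and let Z ⊆ X^(o) \ {x_t}. If there exists a path between x_t and y in G that is not blocked by Z ∪ {t}, then there exists a path between t and y in G not containing the edge t → y that is not blocked by Z; equivalently, t and y are not d-separated by Z in G_{-t} (the graph obtained from G by deleting the edge t → y), so Z does not satisfy the back-door criterion relative to (t, y) in G. -/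
namespace Stmt7Aux

open Relation List CausalDAG

variable {V : Type*}

lemma chain'_get? {R : V → V → Prop} {l : List V} (h : l.Chain' R) {i : ℕ} {a b : V}
    (ha : l[i]? = some a) (hb : l[i+1]? = some b) : R a b := by
  unfold List.Chain' at h
  rw [List.isChain_iff_getElem] at h
  obtain ⟨hb', rfl⟩ := List.getElem?_eq_some_iff.1 hb
  obtain ⟨ha', rfl⟩ := List.getElem?_eq_some_iff.1 ha
  exact h i (by omega)

lemma chain'_of_get? {R : V → V → Prop} {l : List V}
    (h : ∀ i a b, l[i]? = some a → l[i+1]? = some b → R a b) : l.Chain' R := by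
  unfold List.Chain'
  rw [List.isChain_iff_getElem]
  intro i hi
  exact h i _ _ (List.getElem?_eq_getElem (by omega)) (List.getElem?_eq_getElem (by omega))

lemma chain'_transGen {E : V → V → Prop} {l : List V} (h : l.Chain' E) :
    ∀ (k i : ℕ) (a b : V), l[i]? = some a → l[i + k + 1]? = some b →
      Relation.TransGen E a b := by
  intro k
  induction k with
  | zero =>
    intro i a b ha hb
    exact .single (chain'_get? h ha hb)
  | succ k ih =>
    intro i a b ha hb
    have hlt : i + k + 1 < l.length := by
      have := (List.getElem?_eq_some_iff.1 hb).1; omega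
    obtain ⟨c, hc⟩ : ∃ c, l[i+k+1]? = some c := ⟨_, List.getElem?_eq_getElem hlt⟩
    exact (ih i a c ha hc).tail (chain'_get? h hc hb)

lemma chain'_transGen' {E : V → V → Prop} {l : List V} (h : l.Chain' E) {i j : ℕ} {a b : V}
    (hij : i < j) (ha : l[i]? = some a) (hb : l[j]? = some b) :
    Relation.TransGen E a b := by
  apply chain'_transGen h (j - i - 1) i a b ha
  rw [show i + (j - i - 1) + 1 = j by omega]
  exact hb

lemma nodup_of_acyclic {E : V → V → Prop} {l : List V}
    (hac : ∀ v, ¬ Relation.TransGen E v v) (h : l.Chain' E) : l.Nodup := by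
  rw [List.nodup_iff_injective_get]
  rintro ⟨i, hi⟩ ⟨j, hj⟩ hij
  simp only [List.get_eq_getElem] at hij
  rcases lt_trichotomy i j with hlt | he | hlt
  · exfalso
    refine hac _ (chain'_transGen' h hlt (List.getElem?_eq_getElem hi) ?_)
    rw [List.getElem?_eq_getElem hj, ← hij]
  · exact Fin.ext he
  · exfalso
    refine hac _ (chain'_transGen' h hlt (List.getElem?_eq_getElem hj) ?_)
    rw [List.getElem?_eq_getElem hi, hij]

lemma transGen_list {E : V → V → Prop} {a b : V} (h : Relation.TransGen E a b) :
    ∃ l : List V, l.Chain' E ∧ l.head? = some a ∧ l.getLast? = some b ∧ 2 ≤ l.length := by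
  induction h with
  | single hab =>
    exact ⟨[a, _], List.isChain_pair.2 hab, rfl, rfl, le_refl _⟩
  | tail _ hbc ih =>
    obtain ⟨l, hch, hh, hl, hlen⟩ := ih
    refine ⟨l ++ [_], ?_, ?_, List.getLast?_concat, by simp; omega⟩
    · apply List.IsChain.append hch (List.isChain_singleton _)
      intro x hx z hz
      simp only [List.head?_cons, Option.mem_def, Option.some.injEq] at hz
      rw [hl] at hx
      simp only [Option.mem_def, Option.some.injEq] at hx
      exact hx ▸ hz ▸ hbc
    · rw [List.head?_append, hh]; rfl

lemma exists_step {E : V → V → Prop} {a b : V} (h : Relation.TransGen E a b) :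
    ∃ w, E a w := by
  induction h using Relation.TransGen.head_induction_on with
  | single h => exact ⟨_, h⟩
  | head h1 _ _ => exact ⟨_, h1⟩

lemma desc_transfer {E : V → V → Prop} {t y v d : V} (hF2 : ∀ w, ¬ E y w)
    (h : Relation.TransGen E v d) (hdy : d ≠ y) :
    Relation.TransGen (fun a b => E a b ∧ ¬(a = t ∧ b = y)) v d := by
  induction h using Relation.TransGen.head_induction_on with
  | single hstep => exact .single ⟨hstep, fun h2 => hdy h2.2⟩
  | head h1 h2 ih =>
    rename_i a c
    have hcy : c ≠ y := by
      intro hcy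
      obtain ⟨w, hw⟩ := exists_step h2
      rw [hcy] at hw
      exact hF2 w hw
    exact .head ⟨h1, fun h3 => hcy h3.2⟩ ih

lemma get?_last_idx {l : List V} (hnd : l.Nodup) {b : V} {i : ℕ}
    (hl : l.getLast? = some b) (h : l[i]? = some b) : i = l.length - 1 := by
  have h1 : l[l.length - 1]? = some b := by rwa [← List.getLast?_eq_getElem?]
  exact (List.getElem?_inj (List.getElem?_eq_some_iff.1 h).1 hnd).1 (h.trans h1.symm)

lemma get?_idx_unique {l : List V} (hnd : l.Nodup) {a : V} {i j : ℕ}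
    (h1 : l[i]? = some a) (h2 : l[j]? = some a) : i = j :=
  (List.getElem?_inj (List.getElem?_eq_some_iff.1 h1).1 hnd).1 (h1.trans h2.symm)

lemma drop_getLast? {l : List V} {k : ℕ} (hk : k < l.length) :
    (l.drop k).getLast? = l.getLast? := by
  rw [List.getLast?_eq_getElem?, List.getLast?_eq_getElem?, List.getElem?_drop, List.length_drop]
  congr 1
  omega

lemma drop_head? (l : List V) (k : ℕ) : (l.drop k).head? = l[k]? := by
  rw [List.head?_eq_getElem?, List.getElem?_drop, Nat.add_zero]

/-- The central path-construction lemma: glue a reversed directed chain `t :: R`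
onto a suffix `S` (starting at `s0`, ending at `y`). -/
lemma build {E : V → V → Prop} {t y : V} (hac : Acyclic E)
    (hF2 : ∀ w, ¬ E y w) (Z : Set V)
    (R S : List V) (s0 : V)
    (hSh : S.head? = some s0)
    (hSl : S.getLast? = some y)
    (hSnd : S.Nodup) (hSch : S.Chain' (Adj E))
    (htS : t ∉ S) (htR : t ∉ R) (hRnd : R.Nodup)
    (hdisj : ∀ r ∈ R, r ∉ S)
    (hC : (t :: (R ++ [s0])).Chain' (flip E))
    (hs0Z : s0 ∉ Z) (hRZ : ∀ r ∈ R, r ∉ Z)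
    (hint : ∀ r v, 0 < r → r + 1 < S.length → S[r]? = some v →
      ((∃ x z, S[r-1]? = some x ∧ S[r+1]? = some z ∧ E x v ∧ E z v) →
        v ∈ Z ∨ ∃ d, Descendant E v d ∧ d ∈ Z) ∧
      (¬(∃ x z, S[r-1]? = some x ∧ S[r+1]? = some z ∧ E x v ∧ E z v) →
        v ∉ Z)) :
    ∃ q : GPath E t y, ¬ q.UsesEdge t y ∧ ¬ q.BlockedBy Z ∧ q.IntoFirst := by
  set m := R.length with hm
  set L := t :: (R ++ S) with hL
  have hS0 : 0 < S.length := by cases S with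
    | nil => simp at hSh
    | cons a l => simp
  have hS0' : S[0]? = some s0 := by rw [← List.head?_eq_getElem?]; exact hSh
  have hLlen : L.length = m + 1 + S.length := by
    rw [hL]; simp [List.length_append]; omega
  have f1 : ∀ r, L[m + 1 + r]? = S[r]? := by
    intro r
    rw [hL, show m + 1 + r = (m + r) + 1 by omega, List.getElem?_cons_succ,
      List.getElem?_append_right (by omega)]
    congr 1
    omega
  have fC : ∀ i, i ≤ m + 1 → L[i]? = (t :: (R ++ [s0]))[i]? := by
    intro i hi
    match i with
    | 0 => rfl
    | (i'+1) =>
      rw [hL, List.getElem?_cons_succ, List.getElem?_cons_succ]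
      by_cases h : i' < m
      · rw [List.getElem?_append_left h, List.getElem?_append_left (by rw [← hm]; exact h)]
      · have hi' : i' = m := by omega
        subst hi'
        rw [List.getElem?_append_right (le_refl _), List.getElem?_append_right (by rw [← hm]),
          Nat.sub_self, hS0']
        rfl
  have fdown : ∀ i a b, i + 1 ≤ m + 1 → L[i]? = some a → L[i+1]? = some b →
      E b a := by
    intro i a b h ha hb
    rw [fC i (by omega)] at ha
    rw [fC (i+1) h] at hb
    exact chain'_get? hC ha hb
  have f2 : ∀ i a, 1 ≤ i → i ≤ m → L[i]? = some a → a ∈ R := by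
    intro i a h1 h2 ha
    rw [hL, show i = (i-1)+1 by omega, List.getElem?_cons_succ,
      List.getElem?_append_left (show i - 1 < R.length by omega)] at ha
    exact List.mem_of_getElem? ha
  have hnd : L.Nodup := by
    rw [hL, List.nodup_cons]
    constructor
    · intro hmem
      rcases List.mem_append.1 hmem with h | h
      · exact htR h
      · exact htS h
    · exact List.nodup_append.2 ⟨hRnd, hSnd, fun a ha b hb hab => hdisj a ha (hab ▸ hb)⟩
  have h2le : 2 ≤ L.length := by omega
  have hlast' : L.getLast? = some y := by
    rw [hL, show t :: (R ++ S) = (t :: R) ++ S from rfl, List.getLast?_append, hSl]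
    rfl
  have hch : L.Chain' (Adj E) := by
    apply chain'_of_get?
    intro i a b ha hb
    by_cases hi : i + 1 ≤ m + 1
    · exact Or.inr (fdown i a b hi ha hb)
    · rw [show i = m + 1 + (i - m - 1) by omega, f1] at ha
      rw [show i + 1 = m + 1 + ((i - m - 1) + 1) by omega, f1] at hb
      exact chain'_get? hSch ha hb
  refine ⟨⟨L, hnd, h2le, rfl, hlast', hch⟩, ?_, ?_, ?_⟩
  · -- ¬ UsesEdge t y
    rintro ⟨hEty, i, ⟨h1, h2⟩ | ⟨h1, h2⟩⟩
    · -- L[i]? = some t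
      have hi0 : i = 0 := by
        by_contra h0
        by_cases him : i ≤ m
        · exact htR (f2 i t (by omega) him h1)
        · rw [show i = m + 1 + (i - m - 1) by omega, f1] at h1
          exact htS (List.mem_of_getElem? h1)
      subst hi0
      exact hF2 t (fdown 0 t y (by omega) rfl h2)
    ·
      have hi0 : i + 1 = 0 := by
        by_contra h0
        by_cases him : i + 1 ≤ m
        · exact htR (f2 (i+1) t (by omega) him h2)
        · by_cases him' : i + 1 = m + 1
          · rw [him', show m + 1 = m + 1 + 0 by omega, f1, hS0'] at h2
            have : t = s0 := by injection h2.symm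
            apply htS
            rw [this]
            exact List.mem_of_getElem? hS0'
          · rw [show i + 1 = m + 1 + (i + 1 - m - 1) by omega, f1] at h2
            exact htS (List.mem_of_getElem? h2)
      omega
  · -- ¬ BlockedBy Z
    rintro ⟨i, v, ⟨hipos, hilt⟩, hv, hcase⟩
    replace hilt : i + 1 < L.length := hilt
    replace hv : L[i]? = some v := hv
    by_cases him : i ≤ m + 1
    · have hnc : ¬ (∃ x v' z, L[i - 1]? = some x ∧ L[i]? = some v' ∧
          L[i + 1]? = some z ∧ E x v' ∧ E z v') := by
        rintro ⟨x, v', z, hx, hv', hz, hxv, hzv⟩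
        have hE : E v' x :=
          fdown (i-1) x v' (by omega) hx (by rw [show i - 1 + 1 = i by omega]; exact hv')
        exact hac x (Relation.TransGen.head hxv (Relation.TransGen.single hE))
      have hvZ : v ∉ Z := by
        by_cases h1 : i ≤ m
        · exact hRZ v (f2 i v (by omega) h1 hv)
        · have hieq : i = m + 1 := by omega
          rw [hieq, show m + 1 = m + 1 + 0 by omega, f1, hS0'] at hv
          have : s0 = v := by injection hv
          rw [← this]
          exact hs0Z
      rcases hcase with ⟨_, hZ⟩ | ⟨hc, _, _⟩
      · exact hvZ hZ
      · exact hnc hc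
    · set r := i - m - 1 with hr
      have hi' : i = m + 1 + r := by omega
      have hv' : S[r]? = some v := by rw [hi', f1] at hv; exact hv
      have hrlen : r + 1 < S.length := by omega
      have hcolleq : (∃ x v' z, L[i - 1]? = some x ∧ L[i]? = some v' ∧
          L[i + 1]? = some z ∧ E x v' ∧ E z v') ↔
          (∃ x z, S[r-1]? = some x ∧ S[r+1]? = some z ∧ E x v ∧ E z v) := by
        constructor
        · rintro ⟨x, v2, z, hx, hv2, hz, hxv, hzv⟩
          have hveq : v2 = v := by rw [hv2] at hv; injection hv
          rw [show i - 1 = m + 1 + (r - 1) by omega, f1] at hx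
          rw [show i + 1 = m + 1 + (r + 1) by omega, f1] at hz
          exact ⟨x, z, hx, hz, hveq ▸ hxv, hveq ▸ hzv⟩
        · rintro ⟨x, z, hx, hz, hxv, hzv⟩
          refine ⟨x, v, z, ?_, hv, ?_, hxv, hzv⟩
          · rw [show i - 1 = m + 1 + (r - 1) by omega, f1]; exact hx
          · rw [show i + 1 = m + 1 + (r + 1) by omega, f1]; exact hz
      obtain ⟨hcoll_imp, hncoll_imp⟩ := hint r v (by omega) hrlen hv'
      rcases hcase with ⟨hnc, hvZ⟩ | ⟨hc, hvZ, hnod⟩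
      · exact hncoll_imp (fun hcol => hnc (hcolleq.2 hcol)) hvZ
      · rcases hcoll_imp (hcolleq.1 hc) with h | ⟨d, hd, hdZ⟩
        · exact hvZ h
        · exact hnod d hd hdZ
  · -- IntoFirst
    obtain ⟨b, hb⟩ : ∃ b, L[1]? = some b := ⟨_, List.getElem?_eq_getElem (by omega)⟩
    exact ⟨b, hb, fdown 0 t b (by omega) rfl hb⟩

/-- Transfer an unblocked path avoiding the edge `t → y` to the graph with that
edge deleted. -/
lemma transfer {E : V → V → Prop} {t y : V} (hF2 : ∀ w, ¬ E y w) {Z : Set V} (hyZ : y ∉ Z)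
    (q : GPath E t y) (hq1 : ¬ q.UsesEdge t y) (hq2 : ¬ q.BlockedBy Z) :
    ∃ q' : GPath (fun u v => E u v ∧ ¬(u = t ∧ v = y)) t y, ¬ q'.BlockedBy Z := by
  have hchain' : q.nodes.Chain' (Adj (fun u v => E u v ∧ ¬(u = t ∧ v = y))) := by
    apply chain'_of_get?
    intro i a b ha hb
    rcases chain'_get? q.chain ha hb with hE | hE
    · refine Or.inl ⟨hE, ?_⟩
      rintro ⟨rfl, rfl⟩
      exact hq1 ⟨hE, i, Or.inl ⟨ha, hb⟩⟩
    · refine Or.inr ⟨hE, ?_⟩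
      rintro ⟨rfl, rfl⟩
      exact hq1 ⟨hE, i, Or.inr ⟨ha, hb⟩⟩
  refine ⟨⟨q.nodes, q.nodup, q.two_le, q.head_eq, q.last_eq, hchain'⟩, ?_⟩
  rintro ⟨i, v, hi, hv, hcase⟩
  replace hi : 0 < i ∧ i + 1 < q.nodes.length := hi
  replace hv : q.nodes[i]? = some v := hv
  have hvy : v ≠ y := by
    rintro rfl
    have h1 := get?_last_idx q.nodup q.last_eq hv
    have h2 := hi.2
    omega
  have hq2' : (¬ q.ColliderAt i → v ∉ Z) ∧
      (q.ColliderAt i → v ∈ Z ∨ ∃ d, Descendant E v d ∧ d ∈ Z) := by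
    constructor
    · intro hnc hvZ
      exact hq2 ⟨i, v, hi, hv, Or.inl ⟨hnc, hvZ⟩⟩
    · intro hc
      by_contra hcon
      refine hq2 ⟨i, v, hi, hv, Or.inr ⟨hc, fun h => hcon (Or.inl h), ?_⟩⟩
      intro d hd hdZ
      exact hcon (Or.inr ⟨d, hd, hdZ⟩)
  rcases hcase with ⟨hnc', hvZ⟩ | ⟨hc', hvZ, hnod⟩
  · apply hq2'.1 _ hvZ
    rintro ⟨x, v', z, hx, hv2, hz, hxv, hzv⟩
    have hveq : v' = v := by rw [hv2] at hv; injection hv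
    subst hveq
    exact hnc' ⟨x, v', z, hx, hv2, hz, ⟨hxv, fun h => hvy h.2⟩, ⟨hzv, fun h => hvy h.2⟩⟩
  · have hc : q.ColliderAt i := by
      obtain ⟨x, v', z, hx, hv2, hz, hxv, hzv⟩ := hc'
      exact ⟨x, v', z, hx, hv2, hz, hxv.1, hzv.1⟩
    rcases hq2'.2 hc with h | ⟨d, hd, hdZ⟩
    · exact hvZ h
    · exact hnod d (desc_transfer hF2 hd (fun h => hyZ (h ▸ hdZ))) hdZ

end Stmt7Aux

open CausalDAG in
/-- if there is a path between `x_t` and `y` not blocked by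
`Z ∪ {t}`, then there is a path between `t` and `y` not containing the edge
`t → y` that is not blocked by `Z`; equivalently `t` and `y` are not d-separated
by `Z` in `G₋ₜ`, so `Z` does not satisfy the back-door criterion. -/
theorem stmt7 {V : Type*} [Finite V] (M : SemiMarkov V)
    (hA1 : Assumption1 M)
    (xt : V) (hxt : xt ∈ M.Xo) (hedge : M.E xt M.t)
    (Z : Set V) (hZ : Z ⊆ M.Xo \ {xt})
    (h : ∃ p : GPath M.E xt M.y, ¬ p.BlockedBy (Z ∪ {M.t})) :
    (∃ q : GPath M.E M.t M.y, ¬ q.UsesEdge M.t M.y ∧ ¬ q.BlockedBy Z) ∧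
      ¬ DSep (fun u v => M.E u v ∧ ¬(u = M.t ∧ v = M.y)) M.t M.y Z ∧
      ¬ BackDoor M.E M.t M.y Z := by
  classical
  obtain ⟨p, hp⟩ := h
  have hF1 : ∀ w, M.E M.t w → w = M.y := hA1.2.1
  have hF2 : ∀ w, ¬ M.E M.y w := hA1.2.2
  have hac := M.acyclic
  have hyZ : M.y ∉ Z := fun hy => M.y_notin (Or.inl ((hZ hy).1))
  have hxtZ : xt ∉ Z := fun hx => (hZ hx).2 rfl
  have htxt : M.t ≠ xt := fun hh => M.t_notin (Or.inl (hh ▸ hxt))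
  set n := p.nodes.length with hn
  have hlast : p.nodes[n-1]? = some M.y := by
    rw [← List.getLast?_eq_getElem?]; exact p.last_eq
  have hhead : p.nodes[0]? = some xt := by
    rw [← List.head?_eq_getElem?]; exact p.head_eq
  have hG : ∀ i v, p.Interior i → p.nodes[i]? = some v →
      (¬ p.ColliderAt i → v ∉ Z ∪ {M.t}) ∧
      (p.ColliderAt i → v ∈ Z ∪ {M.t} ∨
        ∃ d, Descendant M.E v d ∧ d ∈ Z ∪ {M.t}) := by
    intro i v hi hv
    constructor
    · intro hnc hvm
      exact hp ⟨i, v, hi, hv, Or.inl ⟨hnc, hvm⟩⟩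
    · intro hc
      by_contra hcon
      refine hp ⟨i, v, hi, hv, Or.inr ⟨hc, fun hm => hcon (Or.inl hm), ?_⟩⟩
      intro d hd hdm
      exact hcon (Or.inr ⟨d, hd, hdm⟩)
  have hNC : ∀ i v, p.Interior i → p.nodes[i]? = some v → ¬ p.ColliderAt i →
      v ∉ Z ∧ v ≠ M.t := by
    intro i v hi hv hnc
    have hh := (hG i v hi hv).1 hnc
    exact ⟨fun h => hh (Set.mem_union_left _ h),
      fun h => hh (Set.mem_union_right _ (by simp [h]))⟩
  set Bad : ℕ → Prop := fun l => p.Interior l ∧ ∃ v, p.nodes[l]? = some v ∧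
      (v = M.t ∨ (p.ColliderAt l ∧ v ∉ Z ∧ ∀ d, Descendant M.E v d → d ∉ Z)) with hBadDef
  have hBadGood : ∀ l v, p.Interior l → p.nodes[l]? = some v → ¬ Bad l →
      p.ColliderAt l → v ∈ Z ∨ ∃ d, Descendant M.E v d ∧ d ∈ Z := by
    intro l v hi hv hnb hc
    by_cases h1 : v ∈ Z
    · exact Or.inl h1
    by_cases h2 : ∃ d, Descendant M.E v d ∧ d ∈ Z
    · exact Or.inr h2
    exact absurd ⟨hi, v, hv, Or.inr ⟨hc, h1, fun d hd hdZ => h2 ⟨d, hd, hdZ⟩⟩⟩ hnb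
  have hdroplast : ∀ k, k < n → (p.nodes.drop k).getLast? = some M.y := by
    intro k hk
    rw [Stmt7Aux.drop_getLast? hk]
    exact p.last_eq
  have mkhint : ∀ k, (∀ l, k < l → ¬ Bad l) →
      ∀ (r : ℕ) v, 0 < r → r + 1 < (p.nodes.drop k).length →
        (p.nodes.drop k)[r]? = some v →
      ((∃ x z, (p.nodes.drop k)[r-1]? = some x ∧
          (p.nodes.drop k)[r+1]? = some z ∧ M.E x v ∧ M.E z v) →
        v ∈ Z ∨ ∃ d, Descendant M.E v d ∧ d ∈ Z) ∧
      (¬(∃ x z, (p.nodes.drop k)[r-1]? = some x ∧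
          (p.nodes.drop k)[r+1]? = some z ∧ M.E x v ∧ M.E z v) →
        v ∉ Z) := by
    intro k hnb r v hr hrlen hv
    rw [List.getElem?_drop] at hv
    have hlen : k + r + 1 < n := by
      rw [List.length_drop, ← hn] at hrlen; omega
    have hint' : p.Interior (k+r) := ⟨by omega, by rw [← hn]; omega⟩
    have hcolleq : p.ColliderAt (k+r) ↔
        (∃ x z, (p.nodes.drop k)[r-1]? = some x ∧
          (p.nodes.drop k)[r+1]? = some z ∧ M.E x v ∧ M.E z v) := by
      constructor
      · rintro ⟨x, v2, z, hx, hv2, hz, hxv, hzv⟩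
        have hveq : v2 = v := by rw [hv2] at hv; injection hv
        refine ⟨x, z, ?_, ?_, hveq ▸ hxv, hveq ▸ hzv⟩
        · rw [List.getElem?_drop, show k + (r-1) = k + r - 1 by omega]; exact hx
        · rw [List.getElem?_drop, show k + (r+1) = (k + r) + 1 by omega]; exact hz
      · rintro ⟨x, z, hx, hz, hxv, hzv⟩
        rw [List.getElem?_drop, show k + (r-1) = k + r - 1 by omega] at hx
        rw [List.getElem?_drop, show k + (r+1) = (k + r) + 1 by omega] at hz
        exact ⟨x, v, z, hx, hv, hz, hxv, hzv⟩
    constructor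
    · intro hcol
      exact hBadGood (k+r) v hint' hv (hnb _ (by omega)) (hcolleq.2 hcol)
    · intro hncol
      exact (hNC (k+r) v hint' hv (fun hc => hncol (hcolleq.1 hc))).1
  have key : ∃ q : GPath M.E M.t M.y,
      ¬ q.UsesEdge M.t M.y ∧ ¬ q.BlockedBy Z ∧ q.IntoFirst := by
    by_cases hbad : ∃ l, Bad l
    · -- some bad position exists
      obtain ⟨l0, hl0⟩ := hbad
      have hl0n : l0 ≤ n := le_of_lt (by have := hl0.1.2; rw [← hn] at this; omega)
      set j := Nat.findGreatest Bad n with hj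
      have hBj : Bad j := Nat.findGreatest_spec hl0n hl0
      have hmax : ∀ l, j < l → ¬ Bad l := by
        intro l hl hb
        have hln : l ≤ n := le_of_lt (by have := hb.1.2; rw [← hn] at this; omega)
        exact Nat.findGreatest_is_greatest hl hln hb
      obtain ⟨hjint, vj, hvj, hdis⟩ := hBj
      have hj1 : j + 1 < n := by have := hjint.2; rw [← hn] at this; omega
      by_cases hvt : vj = M.t
      · -- Case B1 : t lies on p as an interior collider
        rw [hvt] at hvj
        obtain ⟨v1, hv1⟩ : ∃ v1, p.nodes[j+1]? = some v1 :=
          ⟨_, List.getElem?_eq_getElem (by rw [← hn]; omega)⟩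
        have hadj : Adj M.E M.t v1 := Stmt7Aux.chain'_get? p.chain hvj hv1
        have hEv1t : M.E v1 M.t := by
          rcases hadj with hE | hE
          · exfalso
            have hv1y : v1 = M.y := hF1 v1 hE
            by_cases hc : p.ColliderAt j
            · obtain ⟨x, v', z, hx, hv', hz, hxv, hzv⟩ := hc
              have hz1 : z = v1 := by rw [hz] at hv1; exact Option.some.inj hv1
              have hv't : v' = M.t := by rw [hv'] at hvj; exact Option.some.inj hvj
              rw [hz1, hv1y, hv't] at hzv
              exact hF2 M.t hzv
            · exact (hNC j M.t hjint hvj hc).2 rfl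
          · exact hE
        have hv1y : v1 ≠ M.y := by rintro rfl; exact hF2 M.t hEv1t
        have hj2 : j + 1 + 1 < n := by
          by_contra hcon
          have hje : j + 1 = n - 1 := by omega
          apply hv1y
          rw [hje, hlast] at hv1
          exact (Option.some.inj hv1).symm
        have hint1 : p.Interior (j+1) := ⟨by omega, by rw [← hn]; omega⟩
        have hnc1 : ¬ p.ColliderAt (j+1) := by
          rintro ⟨x, v', z, hx, hv', hz, hxv, hzv⟩
          have hxt : x = M.t := by
            rw [show j + 1 - 1 = j by omega] at hx
            rw [hx] at hvj; exact Option.some.inj hvj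
          have hv'v1 : v' = v1 := by rw [hv'] at hv1; exact Option.some.inj hv1
          rw [hxt, hv'v1] at hxv
          exact hv1y (hF1 v1 hxv)
        have hv1Z : v1 ∉ Z := (hNC (j+1) v1 hint1 hv1 hnc1).1
        have htS : M.t ∉ p.nodes.drop (j+1) := by
          intro hmem
          obtain ⟨r, hr⟩ := List.mem_iff_getElem?.1 hmem
          rw [List.getElem?_drop] at hr
          have := Stmt7Aux.get?_idx_unique p.nodup hr hvj
          omega
        obtain ⟨q, h1, h2, h3⟩ := Stmt7Aux.build hac hF2 Z [] (p.nodes.drop (j+1)) v1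
          (by rw [Stmt7Aux.drop_head?]; exact hv1)
          (hdroplast (j+1) hj1)
          (p.nodup.sublist (List.drop_sublist _ _))
          (p.chain.drop (j+1))
          htS (by simp) (by simp) (by simp)
          (by
            show List.Chain' (flip M.E) [M.t, v1]
            exact List.isChain_pair.2 hEv1t)
          hv1Z (by simp)
          (mkhint (j+1) (fun l hl => hmax l (by omega)))
        exact ⟨q, h1, h2, h3⟩
      · -- Case B2 : bad collider with a directed path to t
        have hdis' : p.ColliderAt j ∧ vj ∉ Z ∧ ∀ d, Descendant M.E vj d → d ∉ Z := by
          rcases hdis with h | h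
          · exact absurd h hvt
          · exact h
        obtain ⟨hcoll, hvjZ, hnodesc⟩ := hdis'
        have hdesc : Descendant M.E vj M.t := by
          rcases (hG j vj hjint hvj).2 hcoll with hmem | ⟨d, hd, hdmem⟩
          · rw [Set.mem_union, Set.mem_singleton_iff] at hmem
            rcases hmem with h | h
            · exact absurd h hvjZ
            · exact absurd h hvt
          · rw [Set.mem_union, Set.mem_singleton_iff] at hdmem
            rcases hdmem with h | h
            · exact absurd h (hnodesc d hd)
            · exact h ▸ hd
        obtain ⟨D, hDch, hDh, hDl, hDlen⟩ := Stmt7Aux.transGen_list hdesc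
        have hDnd : D.Nodup := Stmt7Aux.nodup_of_acyclic hac hDch
        set dlen := D.length with hdlen
        have hD0 : D[0]? = some vj := by rw [← List.head?_eq_getElem?]; exact hDh
        have hDlast : D[dlen - 1]? = some M.t := by
          rw [← List.getLast?_eq_getElem?]; exact hDl
        have htSsuf : M.t ∉ p.nodes.drop j := by
          intro hmem
          obtain ⟨r, hr⟩ := List.mem_iff_getElem?.1 hmem
          rw [List.getElem?_drop] at hr
          have hlen : j + r < n := by rw [hn]; exact (List.getElem?_eq_some_iff.1 hr).1
          rcases Nat.eq_zero_or_pos r with rfl | hrpos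
          · apply hvt
            simp only [Nat.add_zero] at hr
            rw [hr] at hvj
            exact (Option.some.inj hvj).symm
          · by_cases hil : j + r = n - 1
            · rw [hil, hlast] at hr
              exact M.t_ne_y (by injection hr.symm)
            · exact hmax (j+r) (by omega)
                ⟨⟨by omega, by rw [← hn]; omega⟩, M.t, hr, Or.inl rfl⟩
        set P : ℕ → Prop := fun i => ∃ w, D[i]? = some w ∧ w ∈ p.nodes.drop j
          with hPdef
        have hP0 : P 0 := by
          refine ⟨vj, hD0, ?_⟩
          apply List.mem_of_getElem? (i := 0)
          rw [List.getElem?_drop, Nat.add_zero]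
          exact hvj
        have hPlast : ¬ P (dlen - 1) := by
          rintro ⟨w, hw, hwm⟩
          rw [hDlast] at hw
          have : M.t = w := by injection hw
          rw [← this] at hwm
          exact htSsuf hwm
        set istar := Nat.findGreatest P (dlen - 1) with histar
        have hPstar : P istar := Nat.findGreatest_spec (Nat.zero_le _) hP0
        have histarle : istar ≤ dlen - 1 := Nat.findGreatest_le _
        have histarlt : istar < dlen - 1 := by
          rcases lt_or_eq_of_le histarle with h | h
          · exact h
          · exact absurd (h ▸ hPstar) hPlast
        have hmaxP : ∀ l, istar < l → l ≤ dlen - 1 → ¬ P l :=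
          fun l h1 h2 => Nat.findGreatest_is_greatest h1 h2
        obtain ⟨w, hwD, hwmem⟩ := hPstar
        obtain ⟨r0, hr0⟩ := List.mem_iff_getElem?.1 hwmem
        rw [List.getElem?_drop] at hr0
        set k := j + r0 with hk
        have hkn : k < n := by rw [hn]; exact (List.getElem?_eq_some_iff.1 hr0).1
        set Dtl := D.drop (istar + 1) with hDtlDef
        have hDtllen : Dtl.length = dlen - istar - 1 := by
          rw [hDtlDef, List.length_drop]; omega
        have hDtlne : Dtl ≠ [] := by
          intro hcon
          have := congrArg List.length hcon
          rw [hDtllen] at this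
          simp at this
          omega
        have hDtll : Dtl.getLast? = some M.t := by
          rw [hDtlDef, Stmt7Aux.drop_getLast? (by omega)]
          exact hDl
        set R := Dtl.dropLast.reverse with hRdef
        have hRmem : ∀ x ∈ R, ∃ l', istar + 1 ≤ l' ∧ l' ≤ dlen - 2 ∧
            D[l']? = some x := by
          intro x hx
          rw [hRdef, List.mem_reverse] at hx
          obtain ⟨r', hr'⟩ := List.mem_iff_getElem?.1 hx
          have hr'lt : r' < Dtl.dropLast.length := (List.getElem?_eq_some_iff.1 hr').1
          rw [List.length_dropLast] at hr'lt
          rw [List.dropLast_eq_take, List.getElem?_take_of_lt (by omega)] at hr'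
          rw [hDtlDef, List.getElem?_drop] at hr'
          exact ⟨istar + 1 + r', by omega, by omega, hr'⟩
        have hRnotSsuf : ∀ x ∈ R, x ∉ p.nodes.drop j := by
          intro x hx hmem
          obtain ⟨l', h1, h2, h3⟩ := hRmem x hx
          exact hmaxP l' (by omega) (by omega) ⟨x, h3, hmem⟩
        have hRZ : ∀ x ∈ R, x ∉ Z := by
          intro x hx hxZ
          obtain ⟨l', h1, h2, h3⟩ := hRmem x hx
          exact hnodesc x (Stmt7Aux.chain'_transGen' hDch (by omega) hD0 h3) hxZ
        have htR : M.t ∉ R := by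
          intro hx
          obtain ⟨l', h1, h2, h3⟩ := hRmem _ hx
          have := Stmt7Aux.get?_idx_unique hDnd h3 hDlast
          omega
        have hRnd : R.Nodup := by
          rw [hRdef, List.nodup_reverse]
          exact hDnd.sublist ((Dtl.dropLast_sublist).trans (D.drop_sublist _))
        set S := p.nodes.drop k with hSdef
        have hSsub : ∀ x, x ∈ S → x ∈ p.nodes.drop j := by
          intro x hx
          have hSeq : S = (p.nodes.drop j).drop r0 := by
            rw [hSdef, List.drop_drop]
          rw [hSeq] at hx
          exact List.mem_of_mem_drop hx
        have hdisj : ∀ x ∈ R, x ∉ S := fun x hx hmem => hRnotSsuf x hx (hSsub x hmem)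
        have htS : M.t ∉ S := fun hmem => htSsuf (hSsub _ hmem)
        have hDtlconc : Dtl.dropLast ++ [M.t] = Dtl := by
          have hgl : Dtl.getLast hDtlne = M.t := by
            have := List.getLast?_eq_getLast hDtlne
            rw [this] at hDtll
            injection hDtll
          rw [← hgl]
          exact List.dropLast_append_getLast hDtlne
        have hwDtl : w :: Dtl = D.drop istar := by
          have histarlt' : istar < dlen := by omega
          rw [List.drop_eq_getElem_cons histarlt']
          have : D[istar] = w := by
            have := List.getElem?_eq_getElem histarlt'
            rw [this] at hwD
            injection hwD
          rw [this]
        have hC : (M.t :: (R ++ [w])).Chain' (flip M.E) := by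
          have h1 : (w :: Dtl).Chain' M.E := by
            rw [hwDtl]
            exact hDch.drop istar
          have h2 : (w :: Dtl).reverse = M.t :: (R ++ [w]) := by
            conv_lhs => rw [← hDtlconc]
            simp [hRdef]
          rw [← h2]; unfold List.Chain'; rw [List.isChain_reverse]
          exact h1
        have hs0Z : w ∉ Z := by
          rcases Nat.eq_zero_or_pos istar with h0 | hpos
          · have : vj = w := by
              rw [h0] at hwD
              rw [hwD] at hD0
              exact (Option.some.inj hD0).symm
            rw [← this]
            exact hvjZ
          · intro hwZ
            exact hnodesc w (Stmt7Aux.chain'_transGen' hDch hpos hD0 hwD) hwZ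
        obtain ⟨q, h1, h2, h3⟩ := Stmt7Aux.build hac hF2 Z R S w
          (by rw [hSdef, Stmt7Aux.drop_head?]; exact hr0)
          (by rw [hSdef]; exact hdroplast k hkn)
          (p.nodup.sublist (List.drop_sublist _ _))
          (p.chain.drop k)
          htS htR hRnd hdisj hC hs0Z hRZ
          (mkhint k (fun l hl => hmax l (by omega)))
        exact ⟨q, h1, h2, h3⟩
    · -- Case A : no bad position; prepend t to p
      have htp : M.t ∉ p.nodes := by
        intro hmem
        obtain ⟨i, hi⟩ := List.mem_iff_getElem?.1 hmem
        have hilen : i < n := by rw [hn]; exact (List.getElem?_eq_some_iff.1 hi).1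
        rcases Nat.eq_zero_or_pos i with rfl | hipos
        · rw [hhead] at hi
          exact htxt (by injection hi.symm)
        · by_cases hil : i = n - 1
          · rw [hil, hlast] at hi
            exact M.t_ne_y (by injection hi.symm)
          · exact hbad ⟨i, ⟨hipos, by rw [← hn]; omega⟩, M.t, hi, Or.inl rfl⟩
      have hmk := mkhint 0 (fun l _ hb => hbad ⟨l, hb⟩)
      rw [List.drop_zero] at hmk
      obtain ⟨q, h1, h2, h3⟩ := Stmt7Aux.build hac hF2 Z [] p.nodes xt
        p.head_eq p.last_eq p.nodup p.chain
        htp (by simp) (by simp) (by simp)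
        (by
          show List.Chain' (flip M.E) [M.t, xt]
          exact List.isChain_pair.2 hedge)
        hxtZ (by simp)
        hmk
      exact ⟨q, h1, h2, h3⟩
  obtain ⟨q, hq1, hq2, hq3⟩ := key
  refine ⟨⟨q, hq1, hq2⟩, ?_, ?_⟩
  · obtain ⟨q', hq'⟩ := Stmt7Aux.transfer hF2 hyZ q hq1 hq2
    intro hd
    exact hq' (hd q')
  · rintro ⟨-, hb⟩
    exact hq2 (hb q hq3)
end

section
/- Let G be a finite DAG and S a set of nodes of G. Let P_1 be a path from a to c and P_2 be a path from c to b with a ≠ b, such that P_1 and P_2 share no node other than c. Suppose neither P_1 nor P_2 is blocked by S, the last edge of P_1 points into c, the first edge of P_2 points into c (so that c is a collider on the concatenated path), and c ∈ S. Then the concatenation of P_1 and P_2 is a path from a to b in G that is not blocked by S. -/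
section Stmt9
open CausalDAG

private lemma collider_congr {V : Type*} {E : V → V → Prop} {a b a' b' : V}
    (p : GPath E a b) (q : GPath E a' b') (i j : ℕ)
    (h1 : p.nodes[i - 1]? = q.nodes[j - 1]?)
    (h2 : p.nodes[i]? = q.nodes[j]?)
    (h3 : p.nodes[i + 1]? = q.nodes[j + 1]?) :
    p.ColliderAt i ↔ q.ColliderAt j := by
  unfold GPath.ColliderAt
  rw [h1, h2, h3]

end Stmt9

open CausalDAG in
/-- concatenating two unblocked paths at a conditioned collider
yields an unblocked path. -/
theorem stmt9 {V : Type*} [Finite V] (E : V → V → Prop) (hac : Acyclic E)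
    {a b c : V} (hab : a ≠ b)
    (P1 : GPath E a c) (P2 : GPath E c b) (S : Set V)
    (hshare : ∀ v, v ∈ P1.nodes → v ∈ P2.nodes → v = c)
    (h1 : ¬ P1.BlockedBy S) (h2 : ¬ P2.BlockedBy S)
    (hin1 : ∃ w, P1.nodes[P1.nodes.length - 2]? = some w ∧ E w c)
    (hin2 : ∃ w, P2.nodes[1]? = some w ∧ E w c)
    (hcS : c ∈ S) :
    ∃ P : GPath E a b, P.nodes = P1.nodes ++ P2.nodes.tail ∧
      ¬ P.BlockedBy S := by
  classical
  obtain ⟨w1, hw1, hEw1⟩ := hin1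
  obtain ⟨w2, hw2, hEw2⟩ := hin2
  have hn1 : 2 ≤ P1.nodes.length := P1.two_le
  have hn2 : 2 ≤ P2.nodes.length := P2.two_le
  obtain ⟨T, hL2c⟩ : ∃ T, P2.nodes = c :: T := by
    have hh := P2.head_eq
    cases h : P2.nodes with
    | nil => rw [h] at hh; simp at hh
    | cons x t =>
      rw [h] at hh
      simp only [List.head?_cons, Option.some.injEq] at hh
      exact ⟨t, by rw [hh]⟩
  have hTtail : P2.nodes.tail = T := by rw [hL2c]; rfl
  have hTlen : T.length = P2.nodes.length - 1 := by rw [hL2c]; simp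
  have hlast1 : P1.nodes[P1.nodes.length - 1]? = some c := by
    rw [← List.getLast?_eq_getElem?]
    exact P1.last_eq
  have hhead2 : P2.nodes[0]? = some c := by rw [hL2c]; rfl
  have hNlen : (P1.nodes ++ T).length = P1.nodes.length + (P2.nodes.length - 1) := by
    rw [List.length_append, hTlen]
  have hgetA : ∀ k, k < P1.nodes.length →
      (P1.nodes ++ T)[k]? = P1.nodes[k]? := fun k hk => List.getElem?_append_left hk
  have hgetB : ∀ k, P1.nodes.length - 1 ≤ k →
      (P1.nodes ++ T)[k]? = P2.nodes[k + 1 - P1.nodes.length]? := by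
    intro k hk
    rcases eq_or_lt_of_le hk with h | h
    · have hk1 : k + 1 - P1.nodes.length = 0 := by omega
      rw [hk1, hhead2, hgetA k (by omega), ← h, hlast1]
    · have hk2 : P1.nodes.length ≤ k := by omega
      rw [List.getElem?_append_right hk2, hL2c,
        show k + 1 - P1.nodes.length = (k - P1.nodes.length) + 1 by omega]
      rfl
  have hnodup : (P1.nodes ++ T).Nodup := by
    rw [List.nodup_append']
    have h2n : (c :: T).Nodup := hL2c ▸ P2.nodup
    refine ⟨P1.nodup, (List.nodup_cons.mp h2n).2, ?_⟩
    intro v hv1 hvT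
    have hvc : v = c := hshare v hv1 (by rw [hL2c]; exact List.mem_cons_of_mem _ hvT)
    exact (List.nodup_cons.mp h2n).1 (hvc ▸ hvT)
  have htwo : 2 ≤ (P1.nodes ++ T).length := by omega
  have hhead : (P1.nodes ++ T).head? = some a := by
    rw [List.head?_append, P1.head_eq]; rfl
  have hlastN : (P1.nodes ++ T).getLast? = some b := by
    have hTne : T ≠ [] := by
      intro h; rw [h] at hTlen; simp at hTlen; omega
    obtain ⟨t0, T', hT'⟩ := List.exists_cons_of_ne_nil hTne
    have hb : T.getLast? = some b := by
      have hl := P2.last_eq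
      rw [hL2c, hT', List.getLast?_cons_cons] at hl
      rw [hT']; exact hl
    rw [List.getLast?_append, hb]; rfl
  have hThead : T[0]? = some w2 := by rw [hL2c] at hw2; exact hw2
  have hchain : (P1.nodes ++ T).Chain' (Adj E) := by
    refine List.isChain_append.mpr ?_
    refine ⟨P1.chain, ?_, ?_⟩
    · have hch : (c :: T).Chain' (Adj E) := hL2c ▸ P2.chain
      exact hch.tail
    · intro x hx y hy
      rw [Option.mem_def, P1.last_eq, Option.some.injEq] at hx
      rw [← List.head?_eq_getElem?] at hThead
      rw [Option.mem_def, hThead, Option.some.injEq] at hy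
      subst hx; subst hy
      exact Or.inr hEw2
  refine ⟨⟨P1.nodes ++ T, hnodup, htwo, hhead, hlastN, hchain⟩, by rw [hTtail], ?_⟩
  rintro ⟨i, v, ⟨hi0, hilt⟩, hgv, hcase⟩
  simp only at hgv hilt hcase
  rcases lt_trichotomy (i + 1) P1.nodes.length with hA | hB | hC
  · -- interior of P1
    apply h1
    have hiff : GPath.ColliderAt ⟨P1.nodes ++ T, hnodup, htwo, hhead, hlastN, hchain⟩ i
        ↔ P1.ColliderAt i :=
      collider_congr _ _ i i (hgetA _ (by omega)) (hgetA _ (by omega)) (hgetA _ (by omega))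
    rw [hiff] at hcase
    exact ⟨i, v, ⟨hi0, hA⟩, by rw [← hgetA i (by omega)]; exact hgv, hcase⟩
  · -- the junction: v = c, a collider in S
    have hvc : v = c := by
      have hg := hgv
      rw [hgetA i (by omega), show i = P1.nodes.length - 1 by omega, hlast1] at hg
      exact (Option.some.injEq _ _ ▸ hg).symm
    have hcol : GPath.ColliderAt ⟨P1.nodes ++ T, hnodup, htwo, hhead, hlastN, hchain⟩ i := by
      refine ⟨w1, c, w2, ?_, ?_, ?_, hEw1, hEw2⟩
      · show (P1.nodes ++ T)[i - 1]? = some w1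
        rw [hgetA (i - 1) (by omega), show i - 1 = P1.nodes.length - 2 by omega]
        exact hw1
      · show (P1.nodes ++ T)[i]? = some c
        rw [hgetA i (by omega), show i = P1.nodes.length - 1 by omega]
        exact hlast1
      · show (P1.nodes ++ T)[i + 1]? = some w2
        rw [hgetB (i + 1) (by omega),
          show i + 1 + 1 - P1.nodes.length = 1 by omega]
        exact hw2
    rcases hcase with ⟨hnc, _⟩ | ⟨_, hvs, _⟩
    · exact hnc hcol
    · exact hvs (hvc ▸ hcS)
  · -- interior of P2
    apply h2
    have hiff : GPath.ColliderAt ⟨P1.nodes ++ T, hnodup, htwo, hhead, hlastN, hchain⟩ i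
        ↔ P2.ColliderAt (i + 1 - P1.nodes.length) := by
      refine collider_congr _ _ i _ ?_ ?_ ?_
      · rw [hgetB (i - 1) (by omega),
          show i - 1 + 1 - P1.nodes.length = (i + 1 - P1.nodes.length) - 1 by omega]
      · rw [hgetB i (by omega)]
      · rw [hgetB (i + 1) (by omega),
          show i + 1 + 1 - P1.nodes.length = (i + 1 - P1.nodes.length) + 1 by omega]
    rw [hiff] at hcase
    refine ⟨i + 1 - P1.nodes.length, v, ⟨by omega, by omega⟩, ?_, hcase⟩
    rw [← hgetB i (by omega)]
    exact hgv
end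

section
/- Let G be a finite DAG and S a set of nodes of G. Let P_1 be a path from a to c and P_2 be a path from c to b with a ≠ b, such that P_1 and P_2 share no node other than c. Suppose neither P_1 nor P_2 is blocked by S, at least one of the two edges of the concatenated path adjacent to c points out of c (so that c is not a collider on the concatenated path), and c ∉ S. Then the concatenation of P_1 and P_2 is a path from a to b in G that is not blocked by S. -/
open CausalDAG in
/-- concatenating two unblocked paths at an unconditioned
non-collider yields an unblocked path. -/
theorem stmt10 {V : Type*} [Finite V] (E : V → V → Prop) (hac : Acyclic E)
    {a b c : V} (hab : a ≠ b)
    (P1 : GPath E a c) (P2 : GPath E c b) (S : Set V)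
    (hshare : ∀ v, v ∈ P1.nodes → v ∈ P2.nodes → v = c)
    (h1 : ¬ P1.BlockedBy S) (h2 : ¬ P2.BlockedBy S)
    (hout : ∃ w, (P1.nodes[P1.nodes.length - 2]? = some w ∧ E c w) ∨
      (P2.nodes[1]? = some w ∧ E c w))
    (hcS : c ∉ S) :
    ∃ P : GPath E a b, P.nodes = P1.nodes ++ P2.nodes.tail ∧
      ¬ P.BlockedBy S := by
  have hget0' : ∀ (l : List V), l.head? = l[0]? := by
    intro l; simp [List.head?_eq_getElem?]
  have hlast' : ∀ (l : List V), l.getLast? = l[l.length - 1]? := by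
    intro l; simp [List.getLast?_eq_getElem?]
  have htail' : ∀ (l : List V) (k : ℕ), l.tail[k]? = l[k + 1]? := by
    intro l k; simp [List.getElem?_tail]
  set n1 := P1.nodes.length with hn1def
  set n2 := P2.nodes.length with hn2def
  have hn1 : 2 ≤ n1 := P1.two_le
  have hn2 : 2 ≤ n2 := P2.two_le
  -- P2.nodes = c :: t2
  obtain ⟨t2, ht2⟩ : ∃ t2, P2.nodes = c :: t2 := by
    cases h : P2.nodes with
    | nil => exact absurd (h ▸ P2.head_eq) (by simp)
    | cons x t =>
      have := P2.head_eq; rw [h] at this; simp at this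
      exact ⟨t, by rw [this]⟩
  have hc1 : P1.nodes[n1 - 1]? = some c := by
    rw [← hlast' P1.nodes]; exact P1.last_eq
  have hc2 : P2.nodes[0]? = some c := by rw [← hget0']; exact P2.head_eq
  set L := P1.nodes ++ P2.nodes.tail with hLdef
  have hlenL : L.length = n1 + (n2 - 1) := by
    simp [hLdef, List.length_append, List.length_tail, hn1def, hn2def]
  have hgetL : ∀ i, i < n1 → L[i]? = P1.nodes[i]? := by
    intro i hi; exact List.getElem?_append_left hi
  have hgetR : ∀ j, L[n1 - 1 + j]? = P2.nodes[j]? := by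
    intro j
    rcases Nat.eq_zero_or_pos j with hj | hj
    · subst hj
      rw [Nat.add_zero, hgetL (n1 - 1) (by omega), hc1, hc2]
    · rw [List.getElem?_append_right (by omega : P1.nodes.length ≤ n1 - 1 + j)]
      rw [htail']
      congr 1
      omega
  have hL2get : ∀ i, n1 - 1 ≤ i → L[i]? = P2.nodes[i - (n1 - 1)]? := by
    intro i hi
    have : i = n1 - 1 + (i - (n1 - 1)) := by omega
    rw [this, hgetR]
    congr 1; omega
  -- not in tail
  have hcnt : c ∉ P2.nodes.tail := by
    have := P2.nodup; rw [ht2, List.nodup_cons] at this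
    rw [ht2]; exact this.1
  -- GPath fields
  have hnd : L.Nodup := by
    rw [hLdef, List.nodup_append]
    refine ⟨P1.nodup, P2.nodup.tail, ?_⟩
    intro v hv1 w hv2 hvw; subst hvw
    have hv2' : v ∈ P2.nodes := List.mem_of_mem_tail hv2
    have := hshare v hv1 hv2'
    subst this
    exact hcnt hv2
  have hlen : 2 ≤ L.length := by omega
  have hhd : L.head? = some a := by
    rw [hget0', hgetL 0 (by omega), ← hget0']
    exact P1.head_eq
  have hlst : L.getLast? = some b := by
    rw [hlast', hlenL, show n1 + (n2 - 1) - 1 = n1 - 1 + (n2 - 1) by omega,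
      hgetR, ← hlast' P2.nodes]
    exact P2.last_eq
  have hch : L.Chain' (Adj E) := by
    show List.IsChain (Adj E) (P1.nodes ++ P2.nodes.tail)
    rw [List.isChain_append]
    refine ⟨P1.chain, List.IsChain.tail P2.chain, ?_⟩
    intro x hx y hy
    rw [P1.last_eq, Option.mem_def, Option.some.injEq] at hx
    subst hx
    have hch2 : List.IsChain (Adj E) P2.nodes := P2.chain
    rw [ht2, List.isChain_cons] at hch2
    rw [ht2] at hy
    exact hch2.1 y hy
  refine ⟨⟨L, hnd, hlen, hhd, hlst, hch⟩, rfl, ?_⟩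
  rintro ⟨i, v, ⟨hi0, hi1⟩, hv, hcond⟩
  simp only at hv hi1 hcond
  rw [hlenL] at hi1
  rcases lt_trichotomy i (n1 - 1) with hlt | heq | hgt
  · -- inside P1
    apply h1
    have e1 : L[i - 1]? = P1.nodes[i - 1]? := hgetL _ (by omega)
    have e2 : L[i]? = P1.nodes[i]? := hgetL _ (by omega)
    have e3 : L[i + 1]? = P1.nodes[i + 1]? := hgetL _ (by omega)
    have hcoll : (⟨L, hnd, hlen, hhd, hlst, hch⟩ : GPath E a b).ColliderAt i
        ↔ P1.ColliderAt i := by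
      unfold GPath.ColliderAt
      simp only
      rw [e1, e2, e3]
    refine ⟨i, v, ⟨hi0, by omega⟩, by rw [← e2]; exact hv, ?_⟩
    rcases hcond with ⟨hnc, hvS⟩ | ⟨hc, h⟩
    · exact Or.inl ⟨fun h => hnc (hcoll.mpr h), hvS⟩
    · exact Or.inr ⟨hcoll.mp hc, h⟩
  · -- junction at c
    subst heq
    have hLc : L[n1 - 1]? = some c := by
      rw [hgetL (n1 - 1) (by omega), hc1]
    have hvc : v = c := Option.some_inj.mp ((hv.symm.trans hLc))
    have e1 : L[n1 - 1 - 1]? = P1.nodes[n1 - 2]? := by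
      rw [hgetL _ (by omega)]
      congr 1
    have e3 : L[n1 - 1 + 1]? = P2.nodes[1]? := hgetR 1
    have hnc : ¬ (⟨L, hnd, hlen, hhd, hlst, hch⟩ : GPath E a b).ColliderAt (n1 - 1) := by
      rintro ⟨x, v', z, hx, hv', hz, hxv, hzv⟩
      simp only at hx hv' hz
      rw [e1] at hx
      rw [e3] at hz
      have hv'c : v' = c := Option.some_inj.mp (hv'.symm.trans hLc)
      rw [hv'c] at hxv hzv
      obtain ⟨w, hw⟩ := hout
      rcases hw with ⟨hw1, hcw⟩ | ⟨hw2, hcw⟩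
      · have hxw : x = w := Option.some_inj.mp (hx.symm.trans hw1)
        exact hac c (Relation.TransGen.head hcw
          (Relation.TransGen.single (hxw ▸ hxv)))
      · have hzw : z = w := Option.some_inj.mp (hz.symm.trans hw2)
        exact hac c (Relation.TransGen.head hcw
          (Relation.TransGen.single (hzw ▸ hzv)))
    rcases hcond with ⟨_, hvS⟩ | ⟨hc, _⟩
    · exact hcS (hvc ▸ hvS)
    · exact hnc hc
  · -- inside P2
    apply h2
    set j := i - (n1 - 1) with hjdef
    have hj1 : 1 ≤ j := by omega
    have e2 : L[i]? = P2.nodes[j]? := hL2get i (by omega)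
    have e3 : L[i + 1]? = P2.nodes[j + 1]? := by
      rw [hL2get (i + 1) (by omega)]
      congr 1; omega
    have e1 : L[i - 1]? = P2.nodes[j - 1]? := by
      rw [hL2get (i - 1) (by omega)]
      congr 1; omega
    have hcoll : (⟨L, hnd, hlen, hhd, hlst, hch⟩ : GPath E a b).ColliderAt i
        ↔ P2.ColliderAt j := by
      unfold GPath.ColliderAt
      simp only
      rw [e1, e2, e3]
    refine ⟨j, v, ⟨by omega, by omega⟩, by rw [← e2]; exact hv, ?_⟩
    rcases hcond with ⟨hnc, hvS⟩ | ⟨hc, h⟩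
    · exact Or.inl ⟨fun h => hnc (hcoll.mpr h), hvS⟩
    · exact Or.inr ⟨hcoll.mp hc, h⟩
end

section
/- Let G be a finite DAG containing distinct nodes x_t, t and y, and let G_e be obtained from G by adding a single new node e whose parents are exactly {x_t} or exactly {x_t, t} (and e has no children). Let S be a set of nodes of G with t ∈ S and x_t ∉ S. If e and y are not d-separated by S in G_e, then there exists a path between x_t and y in G that is not blocked by S. -/
section Aux
open CausalDAG

private lemma aux_descend {V : Type*} (E : V → V → Prop) (xt : V) (V0 : Set V) {v : V}
    {w : Option V} (h : Relation.TransGen (subEdge E xt V0) (some v) w) :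
    w = none ∨ ∃ s, w = some s ∧ Relation.TransGen E v s := by
  induction h with
  | single h =>
    rename_i b
    cases b with
    | none => exact Or.inl rfl
    | some s => exact Or.inr ⟨s, rfl, Relation.TransGen.single h⟩
  | tail h₂ step ih =>
    rename_i b c
    rcases ih with rfl | ⟨s, rfl, hts⟩
    · exact absurd step (by simp [subEdge])
    · cases c with
      | none => exact Or.inl rfl
      | some s' => exact Or.inr ⟨s', rfl, hts.tail step⟩

private lemma aux_map_some {V : Type*} (l : List (Option V)) (h : ∀ x ∈ l, x ≠ none) :
    ∃ m : List V, l = m.map some := by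
  induction l with
  | nil => exact ⟨[], rfl⟩
  | cons x xs ih =>
    obtain ⟨m, rfl⟩ := ih (fun z hz => h z (List.mem_cons_of_mem _ hz))
    cases x with
    | none => exact absurd rfl (h none List.mem_cons_self)
    | some v => exact ⟨v :: m, rfl⟩

end Aux

open CausalDAG in
/-- if `e` and `y` are not d-separated by `S` in the sub-sampled
graph (where `e`'s parents are exactly `{x_t}` or `{x_t, t}`), `t ∈ S` and
`x_t ∉ S`, then there is a path between `x_t` and `y` in `G` not blocked by `S`. -/
theorem stmt12 {V : Type*} [Finite V] (E : V → V → Prop) (hac : Acyclic E)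
    (xt t y : V) (hxt_t : xt ≠ t) (hxt_y : xt ≠ y) (ht_y : t ≠ y)
    (V0 : Set V) (hV0 : V0 ⊆ ({t} : Set V))
    (S : Set V) (htS : t ∈ S) (hxtS : xt ∉ S)
    (h : ¬ DSep (subEdge E xt V0) (none : Option V) (some y) (some '' S)) :
    ∃ P : GPath E xt y, ¬ P.BlockedBy S := by
  rw [DSep] at h
  push_neg at h
  obtain ⟨p, hp⟩ := h
  -- p.nodes = none :: (map some m)
  obtain ⟨l', hl'⟩ : ∃ l', p.nodes = none :: l' := by
    cases hn : p.nodes with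
    | nil => have := p.head_eq; rw [hn] at this; simp at this
    | cons a l' =>
      have := p.head_eq; rw [hn] at this; simp at this
      subst this; exact ⟨l', rfl⟩
  have hnone : (none : Option V) ∉ l' := by
    have := p.nodup; rw [hl'] at this; exact (List.nodup_cons.mp this).1
  obtain ⟨m, rfl⟩ := aux_map_some l' (fun x hx hxn => hnone (hxn ▸ hx))
  have hlenp : p.nodes.length = m.length + 1 := by rw [hl']; simp
  have hget : ∀ j, p.nodes[j + 1]? = (m[j]?).map some := by
    intro j; rw [hl']; simp
  have hget0 : p.nodes[0]? = some none := by rw [hl']; rfl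
  -- last of m is y
  have hm_last : m.getLast? = some y := by
    have := p.last_eq; rw [hl'] at this
    cases m with
    | nil => simp at this
    | cons b m' =>
      have this2 : (List.map some (b :: m')).getLast? = some (some y) := by
        rw [show ((none : Option V) :: List.map some (b :: m'))
            = none :: some b :: List.map some m' from rfl,
          List.getLast?_cons_cons] at this
        exact this
      rw [List.getLast?_map] at this2
      cases hbm : (b :: m').getLast? with
      | none => rw [hbm] at this2; simp at this2
      | some z => rw [hbm] at this2; simp at this2; rw [this2]
  -- chain on m
  have hchainm : m.Chain' (Adj E) := by
    have hc := p.chain; rw [hl'] at hc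
    have hc2 : (m.map some).Chain' (Adj (subEdge E xt V0)) := hc.tail
    refine ((List.isChain_map some).mp hc2).imp ?_
    intro a b hab
    cases hab with
    | inl h => exact Or.inl h
    | inr h => exact Or.inr h
  -- m = w0 :: m₁ with w0 = xt or w0 = t
  have hm_ne : m ≠ [] := by
    intro hm0
    have := p.two_le; rw [hlenp, hm0] at this; simp at this
  obtain ⟨w0, m₁, rfl⟩ : ∃ w0 m₁, m = w0 :: m₁ := by
    cases m with
    | nil => exact absurd rfl hm_ne
    | cons a l => exact ⟨a, l, rfl⟩
  have hadj : Adj (subEdge E xt V0) none (some w0) := by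
    have hc := p.chain; rw [hl'] at hc
    exact (List.isChain_cons_cons.mp hc).1
  have hw0 : w0 = xt ∨ w0 = t := by
    cases hadj with
    | inl h => exact absurd h (by simp [subEdge])
    | inr h =>
      cases h with
      | inl h => exact Or.inl h
      | inr h => exact Or.inr (hV0 h)
  -- m₁ ≠ []
  have hm₁ne : m₁ ≠ [] := by
    intro h0
    subst h0
    simp at hm_last
    cases hw0 with
    | inl h => exact hxt_y (h ▸ hm_last)
    | inr h => exact ht_y (h ▸ hm_last)
  have hm₁len : 1 ≤ m₁.length := List.length_pos_iff.mpr hm₁ne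
  cases hw0 with
  | inr hw0 =>
    -- second node is t : path p is blocked at position 1, contradiction
    subst hw0
    refine absurd ?_ hp
    refine ⟨1, some w0, ⟨one_pos, ?_⟩, ?_, Or.inl ⟨?_, ⟨w0, htS, rfl⟩⟩⟩
    · rw [hlenp]; simp; omega
    · rw [hget 0]; rfl
    · rintro ⟨x, v, z, hx, hv, hz, hxv, hzv⟩
      rw [hget0] at hx
      injection hx with hx
      subst hx
      exact (by simp [subEdge] : ¬ subEdge E xt V0 none v) hxv
  | inl hw0 =>
    subst hw0
    have hnodm : (w0 :: m₁).Nodup := by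
      have := p.nodup; rw [hl'] at this
      exact ((List.nodup_cons.mp this).2).of_map _
    refine ⟨⟨w0 :: m₁, hnodm, by simp; omega, rfl, hm_last, hchainm⟩, ?_⟩
    rintro ⟨i, v, ⟨hi0, hi1⟩, hgv, hbl⟩
    simp only at hi1 hgv hbl
    obtain ⟨k, rfl⟩ : ∃ k, i = k + 1 := ⟨i - 1, by omega⟩
    -- p is blocked at k+2
    have hpint : p.Interior (k + 2) := by
      refine ⟨by omega, ?_⟩
      rw [hlenp]
      simp only [List.length_cons] at hi1 ⊢
      omega
    have hpv : p.nodes[k + 2]? = some (some v) := by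
      rw [show k + 2 = (k + 1) + 1 from rfl, hget (k + 1), hgv]; rfl
    have hcol : p.ColliderAt (k + 2) ↔
        GPath.ColliderAt (E := E) (a := w0) (b := y)
          ⟨w0 :: m₁, hnodm, by simp; omega, rfl, hm_last, hchainm⟩ (k + 1) := by
      constructor
      · rintro ⟨X, Vv, Z, hX, hV, hZ, e1, e2⟩
        rw [show k + 2 - 1 = k + 1 from rfl, hget k] at hX
        rw [show k + 2 = (k+1)+1 from rfl, hget (k+1)] at hV
        rw [show k + 2 + 1 = (k+2)+1 from rfl, hget (k+2)] at hZ
        obtain ⟨x, hx, rfl⟩ := Option.map_eq_some_iff.mp hX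
        obtain ⟨vv, hvv, rfl⟩ := Option.map_eq_some_iff.mp hV
        obtain ⟨z, hz, rfl⟩ := Option.map_eq_some_iff.mp hZ
        exact ⟨x, vv, z, by simpa using hx, by simpa using hvv, by simpa using hz, e1, e2⟩
      · rintro ⟨x, vv, z, hx, hvv, hz, e1, e2⟩
        simp only [Nat.add_sub_cancel] at hx hvv hz
        refine ⟨some x, some vv, some z, ?_, ?_, ?_, e1, e2⟩
        · rw [show k + 2 - 1 = k + 1 from rfl, hget k, hx]; rfl
        · rw [show k + 2 = (k+1)+1 from rfl, hget (k+1), hvv]; rfl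
        · rw [show k + 2 + 1 = (k+2)+1 from rfl, hget (k+2), hz]; rfl
    apply hp
    rcases hbl with ⟨hnc, hvS⟩ | ⟨hc, hvS, hdesc⟩
    · exact ⟨k + 2, some v, hpint, hpv, Or.inl ⟨fun hcp => hnc (hcol.mp hcp), ⟨v, hvS, rfl⟩⟩⟩
    · refine ⟨k + 2, some v, hpint, hpv, Or.inr ⟨hcol.mpr hc, ?_, ?_⟩⟩
      · rintro ⟨s, hs, heq⟩
        exact hvS (Option.some.inj heq ▸ hs)
      · intro d hd
        rcases aux_descend E w0 V0 hd with rfl | ⟨s, rfl, hts⟩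
        · rintro ⟨s, _, heq⟩; simp at heq
        · rintro ⟨s', hs', heq⟩
          exact hdesc s hts (Option.some.inj heq ▸ hs')
end
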